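/- arXiv:2401.17963 — 6 statements merged into one kernel-verified Lean document; each statement's English description precedes it below -/
import Mathlib

section
/- If a Markov kernel P on a measurable space X with invariant probability measure Π satisfies the drift condition (PV)(x) - V(x) ≤ -(1-γ) f(x) + K for all x, where V: X → [1,∞), f: X → [1,∞), γ ∈ (0,1), K ∈ (0,∞), then ∫ f dΠ ≤ K/(1-γ). -/
open MeasureTheory ProbabilityTheory

/-- Under a drift condition `(PV)(x) - V(x) ≤ -(1-γ) f(x) + K` for a Markov kernel `P`
with invariant probability measure `π`, we have `∫ f dπ ≤ K/(1-γ)`. -/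
theorem drift_implies_f_integrable
    {𝓧 : Type*} [MeasurableSpace 𝓧]
    (P : Kernel 𝓧 𝓧) [IsMarkovKernel P]
    (π : Measure 𝓧) [IsProbabilityMeasure π]
    (hinv : π.bind (fun x => P x) = π)
    (V f : 𝓧 → ℝ) (hV : Measurable V) (hf : Measurable f)
    (hV1 : ∀ x, 1 ≤ V x) (hf1 : ∀ x, 1 ≤ f x)
    (γ K : ℝ) (hγ : γ ∈ Set.Ioo (0:ℝ) 1) (hK : 0 < K)
    (hVint : ∀ x, Integrable V (P x))
    (hdrift : ∀ x, (∫ y, V y ∂(P x)) - V x ≤ -(1 - γ) * f x + K) :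
    ∫⁻ x, ENNReal.ofReal (f x) ∂π ≤ ENNReal.ofReal (K / (1 - γ)) := by
  obtain ⟨hγ0, hγ1⟩ := hγ
  have h1γ : (0:ℝ) < 1 - γ := by linarith
  set s : ℕ → Set 𝓧 := fun n => {x | V x ≤ (n:ℝ)} with hs
  have hsmeas : ∀ n, MeasurableSet (s n) := fun n => measurableSet_le hV measurable_const
  -- Key estimate for each truncation level n
  have key : ∀ n : ℕ, ∫⁻ x in s n, ENNReal.ofReal (f x) ∂π ≤ ENNReal.ofReal (K / (1 - γ)) := by
    intro n
    set Vn : 𝓧 → ℝ := fun x => min (V x) n with hVnDef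
    have hVnmeas : Measurable Vn := hV.min measurable_const
    have hVnnn : ∀ x, 0 ≤ Vn x := fun x =>
      le_min (by linarith [hV1 x]) (Nat.cast_nonneg n)
    set W : 𝓧 → ENNReal := fun x => ENNReal.ofReal (Vn x) with hWdef
    have hWmeas : Measurable W := hVnmeas.ennreal_ofReal
    have hWle : ∀ x, W x ≤ (n : ENNReal) := fun x => by
      calc W x ≤ ENNReal.ofReal (n:ℝ) := ENNReal.ofReal_le_ofReal (min_le_right _ _)
        _ = (n : ENNReal) := ENNReal.ofReal_natCast n
    have hVnint : ∀ x, Integrable Vn (P x) := by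
      intro x
      refine (hVint x).mono hVnmeas.aestronglyMeasurable (ae_of_all _ fun y => ?_)
      rw [Real.norm_eq_abs, Real.norm_eq_abs, abs_of_nonneg (hVnnn y),
        abs_of_nonneg (by linarith [hV1 y])]
      exact min_le_left _ _
    have hOI : ∀ x, ENNReal.ofReal (∫ y, Vn y ∂(P x)) = ∫⁻ y, W y ∂(P x) := fun x =>
      MeasureTheory.ofReal_integral_eq_lintegral_ofReal (hVnint x) (ae_of_all _ hVnnn)
    -- pointwise real inequality
    have hpt : ∀ x, (∫ y, Vn y ∂(P x)) + (s n).indicator (fun x => (1 - γ) * f x) x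
        ≤ Vn x + K := by
      intro x
      by_cases hx : x ∈ s n
      · rw [Set.indicator_of_mem hx]
        have h1 : (∫ y, Vn y ∂(P x)) ≤ ∫ y, V y ∂(P x) :=
          integral_mono (hVnint x) (hVint x) fun y => min_le_left _ _
        have h2 : Vn x = V x := min_eq_left hx
        have := hdrift x
        rw [h2]; nlinarith [this]
      · rw [Set.indicator_of_notMem hx]
        have h2 : Vn x = (n:ℝ) := min_eq_right (le_of_lt (lt_of_not_ge hx))
        have h1 : (∫ y, Vn y ∂(P x)) ≤ (n:ℝ) := by
          calc (∫ y, Vn y ∂(P x)) ≤ ∫ _, (n:ℝ) ∂(P x) :=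
                integral_mono (hVnint x) (integrable_const _) fun y => min_le_right _ _
            _ = (n:ℝ) := by simp
        rw [h2]; linarith
    -- pointwise ENNReal inequality
    have hpte : ∀ x, (∫⁻ y, W y ∂(P x))
        + (s n).indicator (fun x => ENNReal.ofReal ((1 - γ) * f x)) x
        ≤ W x + ENNReal.ofReal K := by
      intro x
      by_cases hx : x ∈ s n
      · rw [Set.indicator_of_mem hx, ← hOI x,
          ← ENNReal.ofReal_add (integral_nonneg hVnnn)
            (mul_nonneg h1γ.le (by linarith [hf1 x])),
          ← ENNReal.ofReal_add (hVnnn x) hK.le]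
        exact ENNReal.ofReal_le_ofReal (by simpa [Set.indicator_of_mem hx] using hpt x)
      · rw [Set.indicator_of_notMem hx, add_zero, ← hOI x,
          ← ENNReal.ofReal_add (hVnnn x) hK.le]
        exact ENNReal.ofReal_le_ofReal (by simpa [Set.indicator_of_notMem hx] using hpt x)
    -- integrate over π
    have hPWmeas : Measurable fun x => ∫⁻ y, W y ∂(P x) :=
      Measurable.lintegral_kernel hWmeas
    have hsum : (∫⁻ x, ((∫⁻ y, W y ∂(P x))
        + (s n).indicator (fun x => ENNReal.ofReal ((1 - γ) * f x)) x) ∂π)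
        ≤ ∫⁻ x, (W x + ENNReal.ofReal K) ∂π := lintegral_mono hpte
    rw [lintegral_add_left hPWmeas, lintegral_add_right _ measurable_const,
      lintegral_const, measure_univ, mul_one] at hsum
    have hEinv : (∫⁻ x, (∫⁻ y, W y ∂(P x)) ∂π) = ∫⁻ x, W x ∂π := by
      conv_rhs => rw [← hinv]
      rw [MeasureTheory.Measure.lintegral_bind P.measurable.aemeasurable hWmeas.aemeasurable]
    rw [hEinv] at hsum
    have hWfin : (∫⁻ x, W x ∂π) ≠ ⊤ := by
      refine ne_of_lt (lt_of_le_of_lt (lintegral_mono hWle) ?_)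
      simp [lintegral_const]
    have hcancel : (∫⁻ x, (s n).indicator (fun x => ENNReal.ofReal ((1 - γ) * f x)) x ∂π)
        ≤ ENNReal.ofReal K := (ENNReal.add_le_add_iff_left hWfin).mp hsum
    rw [lintegral_indicator (hsmeas n)] at hcancel
    have hrw : (∫⁻ x in s n, ENNReal.ofReal ((1 - γ) * f x) ∂π)
        = ENNReal.ofReal (1 - γ) * ∫⁻ x in s n, ENNReal.ofReal (f x) ∂π := by
      rw [← lintegral_const_mul _ hf.ennreal_ofReal]
      congr 1; ext x; rw [ENNReal.ofReal_mul h1γ.le]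
    rw [hrw] at hcancel
    rw [ENNReal.ofReal_div_of_pos h1γ]
    rw [ENNReal.le_div_iff_mul_le (Or.inl (ENNReal.ofReal_pos.mpr h1γ).ne') (Or.inl ENNReal.ofReal_ne_top)]
    rw [mul_comm]
    exact hcancel
  -- monotone convergence over the sets s n
  have hmono : Monotone fun n : ℕ => (s n).indicator fun x => ENNReal.ofReal (f x) := by
    intro m k hmk
    apply Set.indicator_le_indicator_of_subset
    · intro x hx
      simp only [hs, Set.mem_setOf_eq] at hx ⊢
      exact le_trans hx (Nat.cast_le.mpr hmk)
    · intro x; exact zero_le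
  have hmeasInd : ∀ n : ℕ,
      Measurable ((s n).indicator fun x => ENNReal.ofReal (f x)) := fun n =>
    (hf.ennreal_ofReal).indicator (hsmeas n)
  have hsupEq : ∀ x, (⨆ n : ℕ, (s n).indicator (fun x => ENNReal.ofReal (f x)) x)
      = ENNReal.ofReal (f x) := by
    intro x
    apply le_antisymm
    · exact iSup_le fun n => Set.indicator_le_self _ _ x
    · obtain ⟨n, hn⟩ := exists_nat_ge (V x)
      have hxs : x ∈ s n := by simp only [hs, Set.mem_setOf_eq]; exact hn
      refine le_trans ?_ (le_iSup _ n)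
      exact le_of_eq (Set.indicator_of_mem hxs (fun x => ENNReal.ofReal (f x))).symm
  calc ∫⁻ x, ENNReal.ofReal (f x) ∂π
      = ∫⁻ x, ⨆ n : ℕ, (s n).indicator (fun x => ENNReal.ofReal (f x)) x ∂π := by
        congr 1; ext x; rw [hsupEq x]
    _ = ⨆ n : ℕ, ∫⁻ x, (s n).indicator (fun x => ENNReal.ofReal (f x)) x ∂π :=
        lintegral_iSup hmeasInd hmono
    _ ≤ ENNReal.ofReal (K / (1 - γ)) := by
        apply iSup_le; intro n
        rw [lintegral_indicator (hsmeas n)]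
        exact key n
end

section
/- Under the drift condition (PV)(x) - V(x) ≤ -(1-γ) f(x) + K with V, f ≥ 1 and R > K/(1-γ), set C = {x : f(x) ≤ R} and γ_R = γ + K/R. Then for every x ∈ C, E[Σ_{k=1}^{τ_C} f(X_k) | X_0 = x] ≤ (V(x) - 1 - (1-γ) f(x) + 2K)/(1 - γ_R), where τ_C = inf{t ≥ 1 : X_t ∈ C} is the first return time to C. -/
open MeasureTheory ProbabilityTheory

/-- Under the drift condition, for `x` in the sublevel set `C = {f ≤ R}`,
the expected sum of `f` along the chain up to the first return time to `C` is bounded: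
`E[Σ_{k=1}^{τ_C} f(X_k) | X_0 = x] ≤ (V(x) - 1 - (1-γ) f(x) + 2K)/(1-γ_R)`. -/
theorem drift_return_time_sum_bound
    {𝓧 : Type*} [MeasurableSpace 𝓧]
    (P : Kernel 𝓧 𝓧) [IsMarkovKernel P]
    (Pr : 𝓧 → Measure (ℕ → 𝓧)) (hprob : ∀ x, IsProbabilityMeasure (Pr x))
    (hstart : ∀ x, (Pr x) {ω | ω 0 = x} = 1)
    (hMarkov : ∀ (x : 𝓧) (n : ℕ) (g : 𝓧 → ENNReal), Measurable g →
      ∀ s : Set (ℕ → 𝓧),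
        MeasurableSet[MeasurableSpace.comap (fun ω (i : Fin (n+1)) => ω i) inferInstance] s →
        ∫⁻ ω in s, g (ω (n+1)) ∂(Pr x) = ∫⁻ ω in s, (∫⁻ y, g y ∂(P (ω n))) ∂(Pr x))
    (V f : 𝓧 → ℝ) (hV : Measurable V) (hf : Measurable f)
    (hV1 : ∀ x, 1 ≤ V x) (hf1 : ∀ x, 1 ≤ f x)
    (γ K R : ℝ) (hγ : γ ∈ Set.Ioo (0:ℝ) 1) (hK : 0 < K) (hR : K / (1 - γ) < R)
    (hVint : ∀ x, Integrable V (P x))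
    (hdrift : ∀ x, (∫ y, V y ∂(P x)) - V x ≤ -(1 - γ) * f x + K)
    (C : Set 𝓧) (hC : C = {x | f x ≤ R})
    (x : 𝓧) (hx : x ∈ C) :
    ∫⁻ ω, (∑' k : ℕ,
        Set.indicator {ω' : ℕ → 𝓧 | 1 ≤ k ∧ ∀ j, 1 ≤ j → j < k → ω' j ∉ C}
          (fun ω' => ENNReal.ofReal (f (ω' k))) ω) ∂(Pr x)
      ≤ ENNReal.ofReal ((V x - 1 - (1 - γ) * f x + 2 * K) / (1 - (γ + K / R))) := by
  obtain ⟨hγ0, hγ1⟩ := hγ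
  have h1γ : (0:ℝ) < 1 - γ := by linarith
  have hR0 : (0:ℝ) < R := lt_trans (div_pos hK h1γ) hR
  have hKR : K < R * (1 - γ) := by
    have := (div_lt_iff₀ h1γ).mp hR; linarith
  have h1γR : (0:ℝ) < 1 - (γ + K / R) := by
    have : K / R < 1 - γ := (div_lt_iff₀ hR0).mpr (by linarith)
    linarith
  set ν := Pr x with hν
  haveI : IsProbabilityMeasure ν := hprob x
  set a : ENNReal := ENNReal.ofReal (1 - (γ + K / R)) with ha
  have ha0 : a ≠ 0 := by
    rw [ha]; simp only [ne_eq, ENNReal.ofReal_eq_zero, not_le]; linarith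
  have haT : a ≠ ⊤ := ENNReal.ofReal_ne_top
  have hCmeas : MeasurableSet C := by rw [hC]; exact hf measurableSet_Iic
  -- the events A k = {τ_C ≥ k}
  set A : ℕ → Set (ℕ → 𝓧) := fun k => {ω | ∀ j, 1 ≤ j → j < k → ω j ∉ C} with hA
  have hAmeas : ∀ k, MeasurableSet (A k) := by
    intro k
    have : A k = ⋂ j ∈ Set.Ico 1 k, (fun ω : ℕ → 𝓧 => ω j) ⁻¹' Cᶜ := by
      ext ω; simp [hA, Set.mem_Ico, and_imp]
    rw [this]
    exact MeasurableSet.biInter (Set.to_countable _)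
      (fun j _ => (measurable_pi_apply j) hCmeas.compl)
  have hAanti : ∀ k, A (k+1) ⊆ A k := by
    intro k ω h j h1 h2
    exact h j h1 (h2.trans (Nat.lt_succ_self k))
  have hA1 : A 1 = Set.univ := by
    ext ω; simp only [hA, Set.mem_setOf_eq, Set.mem_univ, iff_true]
    intro j h1 h2; omega
  have hAcomap : ∀ k, MeasurableSet[MeasurableSpace.comap
      (fun (ω : ℕ → 𝓧) (i : Fin (k+1)) => ω i) inferInstance] (A k) := by
    intro k
    refine ⟨⋂ j : Fin (k+1), {v : Fin (k+1) → 𝓧 | 1 ≤ (j:ℕ) → (j:ℕ) < k → v j ∉ C}, ?_, ?_⟩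
    · refine MeasurableSet.iInter fun j => ?_
      by_cases h1 : 1 ≤ (j:ℕ) ∧ (j:ℕ) < k
      · have : {v : Fin (k+1) → 𝓧 | 1 ≤ (j:ℕ) → (j:ℕ) < k → v j ∉ C}
            = (fun v : Fin (k+1) → 𝓧 => v j) ⁻¹' Cᶜ := by
          ext v; simp [h1.1, h1.2]
        rw [this]; exact (measurable_pi_apply j) hCmeas.compl
      · have : {v : Fin (k+1) → 𝓧 | 1 ≤ (j:ℕ) → (j:ℕ) < k → v j ∉ C} = Set.univ := by
          ext v; simp only [Set.mem_setOf_eq, Set.mem_univ, iff_true]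
          intro hj1 hj2; exact absurd ⟨hj1, hj2⟩ h1
        rw [this]; exact MeasurableSet.univ
    · ext ω
      simp only [Set.mem_preimage, Set.mem_iInter, Set.mem_setOf_eq, hA]
      constructor
      · intro h j h1 h2
        exact h ⟨j, by omega⟩ h1 h2
      · intro h j h1 h2
        exact h j h1 h2
  -- ENNReal versions
  set Vg : 𝓧 → ENNReal := fun y => ENNReal.ofReal (V y) with hVg
  set fg : 𝓧 → ENNReal := fun y => ENNReal.ofReal (f y) with hfg
  have hVgm : Measurable Vg := hV.ennreal_ofReal
  have hfgm : Measurable fg := hf.ennreal_ofReal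
  set m : ℕ → ENNReal := fun k => ∫⁻ ω in A k, Vg (ω k) ∂ν with hm
  set F : ℕ → ENNReal := fun k => ∫⁻ ω in A k, fg (ω k) ∂ν with hF
  set p : ℕ → ENNReal := fun k => ν (A k \ A (k+1)) with hp
  -- drift in ENNReal
  have hBpt : ∀ y, (1:ℝ) ≤ V y - (1 - γ) * f y + K := by
    intro y
    have h1 : (1:ℝ) ≤ ∫ z, V z ∂(P y) := by
      have : (1:ℝ) = ∫ _z, (1:ℝ) ∂(P y) := by simp
      rw [this]
      exact integral_mono (integrable_const 1) (hVint y) hV1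
    have := hdrift y
    linarith
  have hdriftE : ∀ y, ∫⁻ z, Vg z ∂(P y) ≤ ENNReal.ofReal (V y - (1 - γ) * f y + K) := by
    intro y
    rw [hVg, ← ofReal_integral_eq_lintegral_ofReal (hVint y)
      (ae_of_all _ fun z => le_trans zero_le_one (hV1 z))]
    exact ENNReal.ofReal_le_ofReal (by have := hdrift y; linarith)
  -- pointwise key inequalities
  have hkeyC : ∀ y, y ∉ C → ∫⁻ z, Vg z ∂(P y) + a * fg y ≤ Vg y := by
    intro y hy
    have hfy : R < f y := by
      rw [hC] at hy; simpa [not_le] using hy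
    have hafg : a * fg y = ENNReal.ofReal ((1 - (γ + K / R)) * f y) := by
      rw [ha, hfg, ← ENNReal.ofReal_mul h1γR.le]
    calc ∫⁻ z, Vg z ∂(P y) + a * fg y
        ≤ ENNReal.ofReal (V y - (1 - γ) * f y + K)
          + ENNReal.ofReal ((1 - (γ + K / R)) * f y) := by
          exact add_le_add (hdriftE y) (le_of_eq hafg)
      _ = ENNReal.ofReal ((V y - (1 - γ) * f y + K) + (1 - (γ + K / R)) * f y) := by
          rw [← ENNReal.ofReal_add (by have := hBpt y; linarith)
            (mul_nonneg h1γR.le (by have := hf1 y; linarith))]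
      _ ≤ Vg y := by
          apply ENNReal.ofReal_le_ofReal
          have hK' : K ≤ K / R * f y := by
            rw [div_mul_eq_mul_div, le_div_iff₀ hR0]
            nlinarith
          nlinarith [hf1 y]
  have hkey : ∀ y, ∫⁻ z, Vg z ∂(P y) + a * fg y ≤ Vg y + ENNReal.ofReal K := by
    intro y
    have hafg : a * fg y = ENNReal.ofReal ((1 - (γ + K / R)) * f y) := by
      rw [ha, hfg, ← ENNReal.ofReal_mul h1γR.le]
    calc ∫⁻ z, Vg z ∂(P y) + a * fg y
        ≤ ENNReal.ofReal (V y - (1 - γ) * f y + K)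
          + ENNReal.ofReal ((1 - (γ + K / R)) * f y) :=
          add_le_add (hdriftE y) (le_of_eq hafg)
      _ = ENNReal.ofReal ((V y - (1 - γ) * f y + K) + (1 - (γ + K / R)) * f y) := by
          rw [← ENNReal.ofReal_add (by have := hBpt y; linarith)
            (mul_nonneg h1γR.le (by have := hf1 y; linarith))]
      _ ≤ ENNReal.ofReal (V y + K) := by
          apply ENNReal.ofReal_le_ofReal
          have h0 : 0 ≤ K / R * f y :=
            mul_nonneg (div_nonneg hK.le hR0.le) (by have := hf1 y; linarith)
          nlinarith [hf1 y]
      _ = Vg y + ENNReal.ofReal K := ENNReal.ofReal_add (by have := hV1 y; linarith) hK.le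
  -- the inner-integral function is measurable
  have hGm : Measurable (fun y => ∫⁻ z, Vg z ∂(P y)) := hVgm.lintegral_kernel
  -- key step inequality
  have hstep : ∀ k, 1 ≤ k → m (k+1) + p k + a * F k ≤ m k + ENNReal.ofReal K * p k := by
    intro k hk
    have hsplit : A k = A (k+1) ∪ (A k \ A (k+1)) := (Set.union_diff_cancel (hAanti k)).symm
    have hdm : MeasurableSet (A k \ A (k+1)) := (hAmeas k).diff (hAmeas (k+1))
    have hdisj : Disjoint (A (k+1)) (A k \ A (k+1)) := Set.disjoint_sdiff_right
    -- step 1 : m (k+1) + p k ≤ ∫_{A k} Vg (ω (k+1))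
    have h1 : m (k+1) + p k ≤ ∫⁻ ω in A k, Vg (ω (k+1)) ∂ν := by
      rw [hsplit, lintegral_union hdm hdisj]
      apply add_le_add_right
      calc p k = ∫⁻ _ω in A k \ A (k+1), 1 ∂ν := (setLIntegral_one _).symm
        _ ≤ ∫⁻ ω in A k \ A (k+1), Vg (ω (k+1)) ∂ν := by
            apply setLIntegral_mono (hVgm.comp (measurable_pi_apply (k+1)))
            intro ω _
            simpa [hVg] using ENNReal.one_le_ofReal.mpr (hV1 (ω (k+1)))
    -- step 2 : Markov
    have h2 : ∫⁻ ω in A k, Vg (ω (k+1)) ∂ν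
        = ∫⁻ ω in A k, (∫⁻ z, Vg z ∂(P (ω k))) ∂ν :=
      hMarkov x k Vg hVgm (A k) (hAcomap k)
    -- step 3 : combine pointwise
    have h3 : ∫⁻ ω in A k, (∫⁻ z, Vg z ∂(P (ω k))) ∂ν + a * F k
        ≤ m k + ENNReal.ofReal K * p k := by
      have haF : a * F k = ∫⁻ ω in A k, a * fg (ω k) ∂ν := by
        rw [hF]; exact (lintegral_const_mul a (hfgm.comp (measurable_pi_apply k))).symm
      have hGm' : Measurable fun ω : ℕ → 𝓧 => ∫⁻ z, Vg z ∂(P (ω k)) :=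
        hGm.comp (measurable_pi_apply k)
      have hadd : ∫⁻ ω in A k, (∫⁻ z, Vg z ∂(P (ω k))) ∂ν + ∫⁻ ω in A k, a * fg (ω k) ∂ν
          = ∫⁻ ω in A k, ((∫⁻ z, Vg z ∂(P (ω k))) + a * fg (ω k)) ∂ν :=
        (lintegral_add_left hGm' _).symm
      rw [haF, hadd, hsplit, lintegral_union hdm hdisj]
      have hpart1 : ∫⁻ ω in A (k+1), ((∫⁻ z, Vg z ∂(P (ω k))) + a * fg (ω k)) ∂ν
          ≤ ∫⁻ ω in A (k+1), Vg (ω k) ∂ν := by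
        apply setLIntegral_mono
          (hVgm.comp (measurable_pi_apply k))
        intro ω hω
        exact hkeyC (ω k) (hω k hk (Nat.lt_succ_self k))
      have hpart2 : ∫⁻ ω in A k \ A (k+1), ((∫⁻ z, Vg z ∂(P (ω k))) + a * fg (ω k)) ∂ν
          ≤ ∫⁻ ω in A k \ A (k+1), Vg (ω k) ∂ν + ENNReal.ofReal K * p k := by
        calc ∫⁻ ω in A k \ A (k+1), ((∫⁻ z, Vg z ∂(P (ω k))) + a * fg (ω k)) ∂ν
            ≤ ∫⁻ ω in A k \ A (k+1), (Vg (ω k) + ENNReal.ofReal K) ∂ν := by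
              apply setLIntegral_mono
                ((hVgm.comp (measurable_pi_apply k)).add_const _)
              intro ω _; exact hkey (ω k)
          _ = ∫⁻ ω in A k \ A (k+1), Vg (ω k) ∂ν + ENNReal.ofReal K * p k := by
              rw [lintegral_add_right _ measurable_const, lintegral_const,
                Measure.restrict_apply_univ, hp, mul_comm]
      calc ∫⁻ ω in A (k+1), ((∫⁻ z, Vg z ∂(P (ω k))) + a * fg (ω k)) ∂ν
            + ∫⁻ ω in A k \ A (k+1), ((∫⁻ z, Vg z ∂(P (ω k))) + a * fg (ω k)) ∂ν
          ≤ ∫⁻ ω in A (k+1), Vg (ω k) ∂ν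
            + (∫⁻ ω in A k \ A (k+1), Vg (ω k) ∂ν + ENNReal.ofReal K * p k) :=
            add_le_add hpart1 hpart2
        _ = (∫⁻ ω in A (k+1), Vg (ω k) ∂ν + ∫⁻ ω in A k \ A (k+1), Vg (ω k) ∂ν)
            + ENNReal.ofReal K * p k := by ring
        _ = m k + ENNReal.ofReal K * p k := by
            have hmk : ∫⁻ ω in A (k+1), Vg (ω k) ∂ν + ∫⁻ ω in A k \ A (k+1), Vg (ω k) ∂ν
                = m k := by
              rw [← lintegral_union hdm hdisj, ← hsplit]
            rw [← hmk, add_assoc]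
    calc m (k+1) + p k + a * F k
        ≤ ∫⁻ ω in A k, Vg (ω (k+1)) ∂ν + a * F k := add_le_add_left h1 _
      _ = ∫⁻ ω in A k, (∫⁻ z, Vg z ∂(P (ω k))) ∂ν + a * F k := by rw [h2]
      _ ≤ m k + ENNReal.ofReal K * p k := h3
    -- starting point is x a.s. (for measurable events)
  have hnull : ∀ U : Set 𝓧, MeasurableSet U → x ∉ U → ν {ω | ω 0 ∈ U} = 0 := by
    intro U hU hxU
    have ht : MeasurableSet {ω : ℕ → 𝓧 | ω 0 ∈ U} := (measurable_pi_apply 0) hU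
    have hsub : {ω : ℕ → 𝓧 | ω 0 = x} ⊆ {ω : ℕ → 𝓧 | ω 0 ∈ U}ᶜ := by
      intro ω hω hmem
      exact hxU (hω ▸ hmem)
    have h1 : ν {ω : ℕ → 𝓧 | ω 0 ∈ U}ᶜ = 1 :=
      le_antisymm prob_le_one (le_trans (le_of_eq (hstart x).symm) (measure_mono hsub))
    exact (prob_compl_eq_one_iff ht).mp h1
  -- bound on m 1
  have hm1 : m 1 ≤ ENNReal.ofReal (V x - (1 - γ) * f x + K) := by
    have hA1m : MeasurableSet[MeasurableSpace.comap
        (fun (ω : ℕ → 𝓧) (i : Fin 1) => ω i) inferInstance] (A 1) := by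
      rw [hA1]; exact MeasurableSet.univ
    have hMe : m 1 = ∫⁻ ω in A 1, (∫⁻ z, Vg z ∂(P (ω 0))) ∂ν := hMarkov x 0 Vg hVgm (A 1) hA1m
    set c : ENNReal := ENNReal.ofReal (V x - (1 - γ) * f x + K) with hc
    have hU : MeasurableSet {y : 𝓧 | c < ∫⁻ z, Vg z ∂(P y)} :=
      measurableSet_lt measurable_const hGm
    have hxU : x ∉ {y : 𝓧 | c < ∫⁻ z, Vg z ∂(P y)} := by
      simp only [Set.mem_setOf_eq, not_lt]
      exact hdriftE x
    have hae : ∀ᵐ ω ∂ν, (∫⁻ z, Vg z ∂(P (ω 0))) ≤ c := by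
      rw [ae_iff]
      have := hnull _ hU hxU
      convert this using 2
      ext ω
      simp [not_le]
    calc m 1 = ∫⁻ ω in A 1, (∫⁻ z, Vg z ∂(P (ω 0))) ∂ν := hMe
      _ = ∫⁻ ω, (∫⁻ z, Vg z ∂(P (ω 0))) ∂ν := by rw [hA1, Measure.restrict_univ]
      _ ≤ ∫⁻ _ω, c ∂ν := lintegral_mono_ae hae
      _ = c := by simp
  -- telescoping
  have hclaim : ∀ N, m (N+1) + (∑ k ∈ Finset.Icc 1 N, (a * F k + p k))
      ≤ m 1 + ENNReal.ofReal K * ∑ k ∈ Finset.Icc 1 N, p k := by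
    intro N
    induction N with
    | zero => simp
    | succ n ih =>
        rw [Finset.sum_Icc_succ_top (by omega), Finset.sum_Icc_succ_top (by omega)]
        calc m (n+1+1) + (∑ k ∈ Finset.Icc 1 n, (a * F k + p k) + (a * F (n+1) + p (n+1)))
            = (m (n+1+1) + p (n+1) + a * F (n+1)) + ∑ k ∈ Finset.Icc 1 n, (a * F k + p k) := by
              ring
          _ ≤ (m (n+1) + ENNReal.ofReal K * p (n+1)) + ∑ k ∈ Finset.Icc 1 n, (a * F k + p k) :=
              add_le_add_left (hstep (n+1) (by omega)) _
          _ = (m (n+1) + ∑ k ∈ Finset.Icc 1 n, (a * F k + p k)) + ENNReal.ofReal K * p (n+1) := by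
              ring
          _ ≤ (m 1 + ENNReal.ofReal K * ∑ k ∈ Finset.Icc 1 n, p k) + ENNReal.ofReal K * p (n+1) :=
              add_le_add_left ih _
          _ = m 1 + ENNReal.ofReal K * (∑ k ∈ Finset.Icc 1 n, p k + p (n+1)) := by
              ring
  -- total probability identity
  have hsum_p : ∀ N, ν (A (N+1)) + ∑ k ∈ Finset.Icc 1 N, p k = 1 := by
    intro N
    induction N with
    | zero => simp [hA1]
    | succ n ih =>
        rw [Finset.sum_Icc_succ_top (by omega)]
        have hd : ν (A (n+1+1)) + p (n+1) = ν (A (n+1)) := by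
          have := measure_add_diff (μ := ν) (hAmeas (n+1+1)).nullMeasurableSet (A (n+1))
          rw [Set.union_eq_self_of_subset_left (hAanti (n+1))] at this
          exact this
        calc ν (A (n+1+1)) + (∑ k ∈ Finset.Icc 1 n, p k + p (n+1))
            = (ν (A (n+1+1)) + p (n+1)) + ∑ k ∈ Finset.Icc 1 n, p k := by ring
          _ = ν (A (n+1)) + ∑ k ∈ Finset.Icc 1 n, p k := by rw [hd]
          _ = 1 := ih
  -- partial sums bound
  set num : ℝ := V x - 1 - (1 - γ) * f x + 2 * K with hnumdef
  have hnum0 : 0 ≤ num := by have := hBpt x; rw [hnumdef]; linarith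
  have hpart : ∀ N, ∑ k ∈ Finset.Icc 1 N, a * F k ≤ ENNReal.ofReal num := by
    intro N
    have hmge : ν (A (N+1)) ≤ m (N+1) := by
      calc ν (A (N+1)) = ∫⁻ _ω in A (N+1), 1 ∂ν := (setLIntegral_one _).symm
        _ ≤ m (N+1) := by
            apply setLIntegral_mono (hVgm.comp (measurable_pi_apply (N+1)))
            intro ω _
            simpa [hVg] using ENNReal.one_le_ofReal.mpr (hV1 (ω (N+1)))
    have hple : ∑ k ∈ Finset.Icc 1 N, p k ≤ 1 := by
      rw [← hsum_p N]; exact le_add_self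
    have h2 : (∑ k ∈ Finset.Icc 1 N, a * F k) + 1
        ≤ ENNReal.ofReal (V x - (1 - γ) * f x + K) + ENNReal.ofReal K := by
      calc (∑ k ∈ Finset.Icc 1 N, a * F k) + 1
          = (∑ k ∈ Finset.Icc 1 N, a * F k) + (ν (A (N+1)) + ∑ k ∈ Finset.Icc 1 N, p k) := by
            rw [hsum_p N]
        _ = ν (A (N+1)) + (∑ k ∈ Finset.Icc 1 N, (a * F k + p k)) := by
            rw [Finset.sum_add_distrib]; ring
        _ ≤ m (N+1) + (∑ k ∈ Finset.Icc 1 N, (a * F k + p k)) := add_le_add_left hmge _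
        _ ≤ m 1 + ENNReal.ofReal K * ∑ k ∈ Finset.Icc 1 N, p k := hclaim N
        _ ≤ ENNReal.ofReal (V x - (1 - γ) * f x + K) + ENNReal.ofReal K * 1 :=
            add_le_add hm1 (mul_le_mul_right hple _)
        _ = ENNReal.ofReal (V x - (1 - γ) * f x + K) + ENNReal.ofReal K := by rw [mul_one]
    have h3 : ENNReal.ofReal (V x - (1 - γ) * f x + K) + ENNReal.ofReal K
        = ENNReal.ofReal num + 1 := by
      rw [← ENNReal.ofReal_add (by have := hBpt x; linarith) hK.le, ← ENNReal.ofReal_one,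
        ← ENNReal.ofReal_add hnum0 zero_le_one]
      congr 1
      rw [hnumdef]; ring
    rw [h3] at h2
    exact (ENNReal.add_le_add_iff_right ENNReal.one_ne_top).mp h2
  -- identify the terms of the goal's sum
  have hSeq : ∀ k : ℕ, 1 ≤ k →
      {ω' : ℕ → 𝓧 | 1 ≤ k ∧ ∀ j, 1 ≤ j → j < k → ω' j ∉ C} = A k := by
    intro k hk
    ext ω; simp [hA, hk]
  have hS0 : {ω' : ℕ → 𝓧 | 1 ≤ 0 ∧ ∀ j, 1 ≤ j → j < 0 → ω' j ∉ C} = (∅ : Set (ℕ → 𝓧)) := by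
    ext ω; simp
  have hSmeas : ∀ k : ℕ, MeasurableSet
      {ω' : ℕ → 𝓧 | 1 ≤ k ∧ ∀ j, 1 ≤ j → j < k → ω' j ∉ C} := by
    intro k
    rcases Nat.eq_zero_or_pos k with hk | hk
    · subst hk; rw [hS0]; exact MeasurableSet.empty
    · rw [hSeq k hk]; exact hAmeas k
  have hterm : ∀ k : ℕ,
      ∫⁻ ω, Set.indicator {ω' : ℕ → 𝓧 | 1 ≤ k ∧ ∀ j, 1 ≤ j → j < k → ω' j ∉ C}
        (fun ω' => ENNReal.ofReal (f (ω' k))) ω ∂ν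
      = if 1 ≤ k then F k else 0 := by
    intro k
    rw [lintegral_indicator (hSmeas k)]
    rcases Nat.eq_zero_or_pos k with hk | hk
    · subst hk
      rw [hS0]
      simp
    · have hk1 : 1 ≤ k := hk
      rw [hSeq k hk1, if_pos hk1, hF]
  have hTm : ∀ k : ℕ, Measurable fun ω : ℕ → 𝓧 =>
      Set.indicator {ω' : ℕ → 𝓧 | 1 ≤ k ∧ ∀ j, 1 ≤ j → j < k → ω' j ∉ C}
        (fun ω' => ENNReal.ofReal (f (ω' k))) ω := by
    intro k
    exact Measurable.indicator ((hf.comp (measurable_pi_apply k)).ennreal_ofReal) (hSmeas k)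
  rw [lintegral_tsum (fun k => (hTm k).aemeasurable)]
  have hgoalsum : ∑' k : ℕ, (∫⁻ ω, Set.indicator
        {ω' : ℕ → 𝓧 | 1 ≤ k ∧ ∀ j, 1 ≤ j → j < k → ω' j ∉ C}
        (fun ω' => ENNReal.ofReal (f (ω' k))) ω ∂ν)
      = ∑' k : ℕ, (if 1 ≤ k then F k else 0) := by
    exact tsum_congr hterm
  rw [hgoalsum]
  have hRHS : ENNReal.ofReal (num / (1 - (γ + K / R))) = ENNReal.ofReal num / a := by
    rw [ha, ENNReal.ofReal_div_of_pos h1γR]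
  rw [hnumdef] at hRHS
  rw [hRHS, ← hnumdef]
  rw [ENNReal.le_div_iff_mul_le (Or.inl ha0) (Or.inl haT), ← ENNReal.tsum_mul_right]
  apply Summable.tsum_le_of_sum_le ENNReal.summable
  intro s
  set N := s.sup id with hN
  have hsub : s ⊆ insert 0 (Finset.Icc 1 N) := by
    intro k hk
    have hkN : k ≤ N := Finset.le_sup (f := id) hk
    rcases Nat.eq_zero_or_pos k with h | h
    · simp [h]
    · exact Finset.mem_insert_of_mem (Finset.mem_Icc.mpr ⟨h, hkN⟩)
  calc ∑ k ∈ s, (if 1 ≤ k then F k else 0) * a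
      ≤ ∑ k ∈ insert 0 (Finset.Icc 1 N), (if 1 ≤ k then F k else 0) * a :=
        Finset.sum_le_sum_of_subset hsub
    _ = ∑ k ∈ Finset.Icc 1 N, (if 1 ≤ k then F k else 0) * a := by
        rw [Finset.sum_insert (by simp)]
        simp
    _ = ∑ k ∈ Finset.Icc 1 N, a * F k := by
        apply Finset.sum_congr rfl
        intro k hk
        rw [if_pos (Finset.mem_Icc.mp hk).1, mul_comm]
    _ ≤ ENNReal.ofReal num := hpart N
end

section
/- Suppose the Markov kernel P has unique invariant probability measure Π and satisfies the drift condition (PV)(x) - V(x) ≤ -(1-γ) f(x) + K with V, f ≥ 1. Set C = {x : f(x) ≤ R} for R > K/(1-γ) and suppose ∫_C V dΠ < ∞. Then for every measurable φ with |φ| ≤ f, the function φ is Π-integrable and ∫_C E[Σ_{k=1}^{τ_C} φ(X_k) | X_0 = x] Π(dx) = ∫_X φ dΠ. -/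
open MeasureTheory ProbabilityTheory ENNReal
section Aux

variable {𝓧 : Type*} [MeasurableSpace 𝓧]

/-- One-step operator on nonnegative functions. -/
noncomputable def PlOp (P : Kernel 𝓧 𝓧) (g : 𝓧 → ℝ≥0∞) : 𝓧 → ℝ≥0∞ :=
  fun x => ∫⁻ y, g y ∂P x

lemma measurable_PlOp (P : Kernel 𝓧 𝓧) [IsSFiniteKernel P] {g : 𝓧 → ℝ≥0∞} (hg : Measurable g) :
    Measurable (PlOp P g) := Measurable.lintegral_kernel hg

lemma PlOp_mono (P : Kernel 𝓧 𝓧) {g₁ g₂ : 𝓧 → ℝ≥0∞} (h : g₁ ≤ g₂) :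
    PlOp P g₁ ≤ PlOp P g₂ := fun x => lintegral_mono h

/-- Iterates of the "avoid `C`" sub-Markov operator. -/
noncomputable def gseq (P : Kernel 𝓧 𝓧) (C : Set 𝓧) (g : 𝓧 → ℝ≥0∞) : ℕ → 𝓧 → ℝ≥0∞
  | 0 => g
  | n + 1 => Cᶜ.indicator (PlOp P (gseq P C g n))

lemma gseq_measurable (P : Kernel 𝓧 𝓧) [IsSFiniteKernel P] {C : Set 𝓧} (hCm : MeasurableSet C)
    {g : 𝓧 → ℝ≥0∞} (hg : Measurable g) : ∀ n, Measurable (gseq P C g n)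
  | 0 => hg
  | n + 1 => ((measurable_PlOp P (gseq_measurable P hCm hg n)).indicator hCm.compl)

lemma gseq_mono (P : Kernel 𝓧 𝓧) (C : Set 𝓧) {g₁ g₂ : 𝓧 → ℝ≥0∞} (h : g₁ ≤ g₂) :
    ∀ n, gseq P C g₁ n ≤ gseq P C g₂ n
  | 0 => h
  | n + 1 => fun x => Set.indicator_le_indicator (PlOp_mono P (gseq_mono P C h n) x)

lemma gseq_add (P : Kernel 𝓧 𝓧) [IsSFiniteKernel P] {C : Set 𝓧} {g₁ g₂ : 𝓧 → ℝ≥0∞}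
    (hg₁ : Measurable g₁) (hg₂ : Measurable g₂) (hCm : MeasurableSet C) :
    ∀ n, gseq P C (g₁ + g₂) n = gseq P C g₁ n + gseq P C g₂ n
  | 0 => rfl
  | n + 1 => by
      have h := gseq_add P hg₁ hg₂ hCm n
      have hm₁ := gseq_measurable P hCm hg₁ n
      funext x
      simp only [gseq, h, Pi.add_apply]
      have : PlOp P (gseq P C g₁ n + gseq P C g₂ n)
          = fun x => PlOp P (gseq P C g₁ n) x + PlOp P (gseq P C g₂ n) x := by
        funext y
        simp only [PlOp, Pi.add_apply]
        exact lintegral_add_left hm₁ _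
      rw [this]
      by_cases hx : x ∈ Cᶜ <;> simp [Set.indicator_apply, hx]

lemma gseq_smul (P : Kernel 𝓧 𝓧) [IsSFiniteKernel P] {C : Set 𝓧} {g : 𝓧 → ℝ≥0∞}
    (hg : Measurable g) (hCm : MeasurableSet C) (c : ℝ≥0∞) :
    ∀ n, gseq P C (fun x => c * g x) n = fun x => c * gseq P C g n x
  | 0 => rfl
  | n + 1 => by
      have h := gseq_smul P hg hCm c n
      funext x
      simp only [gseq, h]
      have : PlOp P (fun x => c * gseq P C g n x)
          = fun x => c * PlOp P (gseq P C g n) x := by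
        funext y
        simp only [PlOp]
        exact lintegral_const_mul c (gseq_measurable P hCm hg n)
      rw [this]
      by_cases hx : x ∈ Cᶜ <;> simp [Set.indicator_apply, hx]

lemma gseq_shift (P : Kernel 𝓧 𝓧) (C : Set 𝓧) (g : 𝓧 → ℝ≥0∞) :
    ∀ n, gseq P C g (n + 1) = gseq P C (gseq P C g 1) n
  | 0 => rfl
  | n + 1 => by
      show Cᶜ.indicator (PlOp P (gseq P C g (n+1))) = _
      rw [gseq_shift P C g n]
      rfl

end Aux

open MeasureTheory ProbabilityTheory ENNReal

section Aux2

variable {𝓧 : Type*} [MeasurableSpace 𝓧]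

lemma lintegral_coord_zero (x : 𝓧) (μ : Measure (ℕ → 𝓧)) [IsProbabilityMeasure μ]
    (hst : μ {ω | ω 0 = x} = 1) {h : 𝓧 → ℝ≥0∞} (hh : Measurable h) :
    ∫⁻ ω, h (ω 0) ∂μ = h x := by
  have hm0 : Measurable fun ω : ℕ → 𝓧 => ω 0 := measurable_pi_apply 0
  set ν : Measure 𝓧 := Measure.map (fun ω => ω 0) μ with hν
  have : IsProbabilityMeasure ν := Measure.isProbabilityMeasure_map hm0.aemeasurable
  have hin : ∀ A : Set 𝓧, MeasurableSet A → x ∈ A → ν A = 1 := by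
    intro A hA hxA
    refine le_antisymm prob_le_one ?_
    rw [hν, Measure.map_apply hm0 hA]
    calc (1:ℝ≥0∞) = μ {ω | ω 0 = x} := hst.symm
    _ ≤ μ ((fun ω => ω 0) ⁻¹' A) := by
        apply measure_mono; intro ω hω; simp only [Set.mem_setOf_eq] at hω
        simp [Set.mem_preimage, hω, hxA]
  have hd : ν = Measure.dirac x := by
    ext A hA
    by_cases hxA : x ∈ A
    · rw [hin A hA hxA, Measure.dirac_apply' _ hA]
      simp [Set.indicator_of_mem hxA]
    · have hc : ν Aᶜ = 1 := hin Aᶜ hA.compl hxA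
      have h2 : ν Aᶜ = 1 - ν A := prob_compl_eq_one_sub hA
      have h3 : ν A ≤ 1 := prob_le_one
      have : ν A = 0 := by
        by_contra hne
        have h4 : 1 - ν A < 1 :=
          ENNReal.sub_lt_self one_ne_top one_ne_zero hne
        rw [← h2, hc] at h4
        exact lt_irrefl _ h4
      rw [this, Measure.dirac_apply' _ hA]
      simp [Set.indicator_of_notMem hxA]
  calc ∫⁻ ω, h (ω 0) ∂μ = ∫⁻ y, h y ∂ν := (lintegral_map hh hm0).symm
  _ = h x := by rw [hd]; exact lintegral_dirac' x hh

/-- The avoidance set up to time `k` (exclusive). -/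
def avoidSet (C : Set 𝓧) (k : ℕ) : Set (ℕ → 𝓧) :=
  {ω | ∀ j, 1 ≤ j → j < k → ω j ∉ C}

lemma avoidSet_measurable {C : Set 𝓧} (hCm : MeasurableSet C) (k : ℕ) :
    MeasurableSet (avoidSet C k) := by
  have : avoidSet C k = ⋂ (j : ℕ) (_ : 1 ≤ j) (_ : j < k), (fun ω : ℕ → 𝓧 => ω j) ⁻¹' Cᶜ := by
    ext ω; simp [avoidSet]
  rw [this]
  exact MeasurableSet.iInter fun j => MeasurableSet.iInter fun _ =>
    MeasurableSet.iInter fun _ => (measurable_pi_apply j) hCm.compl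

lemma avoidSet_comap {C : Set 𝓧} (hCm : MeasurableSet C) (k : ℕ) :
    MeasurableSet[MeasurableSpace.comap (fun (ω : ℕ → 𝓧) (i : Fin (k+1)) => ω i)
      inferInstance] (avoidSet C (k+1)) := by
  rw [MeasurableSpace.measurableSet_comap]
  refine ⟨{v : Fin (k+1) → 𝓧 | ∀ i : Fin (k+1), 1 ≤ (i : ℕ) → v i ∉ C}, ?_, ?_⟩
  · have : {v : Fin (k+1) → 𝓧 | ∀ i : Fin (k+1), 1 ≤ (i : ℕ) → v i ∉ C}
        = ⋂ (i : Fin (k+1)) (_ : 1 ≤ (i : ℕ)), (fun v : Fin (k+1) → 𝓧 => v i) ⁻¹' Cᶜ := by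
      ext v; simp
    rw [this]
    exact MeasurableSet.iInter fun i => MeasurableSet.iInter fun _ =>
      (measurable_pi_apply i) hCm.compl
  · ext ω
    constructor
    · intro hω j h1 hk
      exact hω ⟨j, hk⟩ h1
    · intro hω i h1
      exact hω i h1 i.isLt

lemma avoidSet_succ (C : Set 𝓧) (k : ℕ) :
    avoidSet C (k+2) = avoidSet C (k+1) ∩ (fun ω : ℕ → 𝓧 => ω (k+1)) ⁻¹' Cᶜ := by
  ext ω
  constructor
  · intro hω
    exact ⟨fun j h1 hj => hω j h1 (Nat.lt_succ_of_lt hj), hω (k+1) (Nat.succ_le_succ (Nat.zero_le _)) (Nat.lt_succ_self _)⟩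
  · rintro ⟨h1, h2⟩ j hj1 hj2
    rcases Nat.lt_succ_iff_lt_or_eq.mp hj2 with h | h
    · exact h1 j hj1 h
    · subst h; exact h2

end Aux2
section Aux3
variable {𝓧 : Type*} [MeasurableSpace 𝓧]

lemma markov_rep (P : Kernel 𝓧 𝓧) [IsMarkovKernel P] {C : Set 𝓧} (hCm : MeasurableSet C)
    (Pr : 𝓧 → Measure (ℕ → 𝓧)) (hprob : ∀ x, IsProbabilityMeasure (Pr x))
    (hstart : ∀ x, (Pr x) {ω | ω 0 = x} = 1)
    (hMarkov : ∀ (x : 𝓧) (n : ℕ) (g : 𝓧 → ENNReal), Measurable g →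
      ∀ s : Set (ℕ → 𝓧),
        MeasurableSet[MeasurableSpace.comap (fun ω (i : Fin (n+1)) => ω i) inferInstance] s →
        ∫⁻ ω in s, g (ω (n+1)) ∂(Pr x) = ∫⁻ ω in s, (∫⁻ y, g y ∂(P (ω n))) ∂(Pr x))
    (x : 𝓧) :
    ∀ (k : ℕ) (g : 𝓧 → ℝ≥0∞), Measurable g →
      ∫⁻ ω in avoidSet C (k+1), g (ω (k+1)) ∂(Pr x) = PlOp P (gseq P C g k) x := by
  intro k
  induction k with
  | zero =>
      intro g hg
      have huniv : avoidSet C 1 = Set.univ := by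
        ext ω; simp only [avoidSet, Set.mem_setOf_eq, Set.mem_univ, iff_true]
        intro j h1 h2; omega
      have := hprob x
      rw [huniv, Measure.restrict_univ]
      have h1 : ∫⁻ ω, g (ω 1) ∂(Pr x) = ∫⁻ ω, (∫⁻ y, g y ∂(P (ω 0))) ∂(Pr x) := by
        have := hMarkov x 0 g hg Set.univ MeasurableSet.univ
        rwa [Measure.restrict_univ] at this
      rw [h1]
      exact lintegral_coord_zero x (Pr x) (hstart x) (measurable_PlOp P hg)
  | succ k ih =>
      intro g hg
      have hPg : Measurable (PlOp P g) := measurable_PlOp P hg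
      have hind : Measurable (Cᶜ.indicator (PlOp P g)) := hPg.indicator hCm.compl
      have step1 : ∫⁻ ω in avoidSet C (k+2), g (ω (k+2)) ∂(Pr x)
          = ∫⁻ ω in avoidSet C (k+2), PlOp P g (ω (k+1)) ∂(Pr x) :=
        hMarkov x (k+1) g hg _ (avoidSet_comap hCm (k+1))
      have hT : MeasurableSet ((fun ω : ℕ → 𝓧 => ω (k+1)) ⁻¹' Cᶜ) :=
        (measurable_pi_apply (k+1)) hCm.compl
      have step2 : ∫⁻ ω in avoidSet C (k+2), PlOp P g (ω (k+1)) ∂(Pr x)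
          = ∫⁻ ω in avoidSet C (k+1), (Cᶜ.indicator (PlOp P g)) (ω (k+1)) ∂(Pr x) := by
        have he : ∀ ω : ℕ → 𝓧,
            ((fun ω : ℕ → 𝓧 => ω (k+1)) ⁻¹' Cᶜ).indicator (fun ω => PlOp P g (ω (k+1))) ω
              = (Cᶜ.indicator (PlOp P g)) (ω (k+1)) := by
          intro ω
          by_cases hω : ω (k+1) ∈ Cᶜ
          · rw [Set.indicator_of_mem (by simpa using hω), Set.indicator_of_mem hω]
          · rw [Set.indicator_of_notMem (by simpa using hω), Set.indicator_of_notMem hω]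
        calc ∫⁻ ω in avoidSet C (k+2), PlOp P g (ω (k+1)) ∂(Pr x)
            = ∫⁻ ω in ((fun ω : ℕ → 𝓧 => ω (k+1)) ⁻¹' Cᶜ) ∩ avoidSet C (k+1),
                PlOp P g (ω (k+1)) ∂(Pr x) := by
              rw [avoidSet_succ, Set.inter_comm]
          _ = ∫⁻ ω in ((fun ω : ℕ → 𝓧 => ω (k+1)) ⁻¹' Cᶜ),
                PlOp P g (ω (k+1)) ∂((Pr x).restrict (avoidSet C (k+1))) := by
              rw [Measure.restrict_restrict hT]
          _ = ∫⁻ ω, ((fun ω : ℕ → 𝓧 => ω (k+1)) ⁻¹' Cᶜ).indicator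
                (fun ω => PlOp P g (ω (k+1))) ω ∂((Pr x).restrict (avoidSet C (k+1))) := by
              rw [lintegral_indicator hT]
          _ = _ := by
              apply lintegral_congr he
      rw [step1, step2, ih _ hind]
      congr 1
      rw [gseq_shift]
      rfl

end Aux3

set_option maxHeartbeats 1600000

/-- Representation of the invariant measure: if `P` has unique invariant probability
measure `π`, the drift condition holds, `C = {f ≤ R}` with `R > K/(1-γ)`, and
`∫_C V dπ < ∞`, then every measurable `φ` with `|φ| ≤ f` is `π`-integrable and
`∫_C E[Σ_{k=1}^{τ_C} φ(X_k) | X_0 = x] π(dx) = ∫ φ dπ`. -/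
theorem invariant_measure_representation
    {𝓧 : Type*} [MeasurableSpace 𝓧]
    (P : Kernel 𝓧 𝓧) [IsMarkovKernel P]
    (π : Measure 𝓧) [IsProbabilityMeasure π]
    (hinv : π.bind (fun x => P x) = π)
    (huniq : ∀ ν : Measure 𝓧, IsProbabilityMeasure ν → ν.bind (fun x => P x) = ν → ν = π)
    (Pr : 𝓧 → Measure (ℕ → 𝓧)) (hprob : ∀ x, IsProbabilityMeasure (Pr x))
    (hstart : ∀ x, (Pr x) {ω | ω 0 = x} = 1)
    (hMarkov : ∀ (x : 𝓧) (n : ℕ) (g : 𝓧 → ENNReal), Measurable g →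
      ∀ s : Set (ℕ → 𝓧),
        MeasurableSet[MeasurableSpace.comap (fun ω (i : Fin (n+1)) => ω i) inferInstance] s →
        ∫⁻ ω in s, g (ω (n+1)) ∂(Pr x) = ∫⁻ ω in s, (∫⁻ y, g y ∂(P (ω n))) ∂(Pr x))
    (V f : 𝓧 → ℝ) (hV : Measurable V) (hf : Measurable f)
    (hV1 : ∀ x, 1 ≤ V x) (hf1 : ∀ x, 1 ≤ f x)
    (γ K R : ℝ) (hγ : γ ∈ Set.Ioo (0:ℝ) 1) (hK : 0 < K) (hR : K / (1 - γ) < R)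
    (hVint : ∀ x, Integrable V (P x))
    (hdrift : ∀ x, (∫ y, V y ∂(P x)) - V x ≤ -(1 - γ) * f x + K)
    (C : Set 𝓧) (hC : C = {x | f x ≤ R})
    (hVC : IntegrableOn V C π)
    (φ : 𝓧 → ℝ) (hφm : Measurable φ) (hφ : ∀ z, |φ z| ≤ f z) :
    Integrable φ π ∧
      ∫ x in C, (∫ ω, (∑' k : ℕ,
          Set.indicator {ω' : ℕ → 𝓧 | 1 ≤ k ∧ ∀ j, 1 ≤ j → j < k → ω' j ∉ C}
            (fun ω' => φ (ω' k)) ω) ∂(Pr x)) ∂π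
        = ∫ z, φ z ∂π := by
  obtain ⟨hγ0, hγ1⟩ := hγ
  have h1γ : (0:ℝ) < 1 - γ := by linarith
  have hR0 : (0:ℝ) < R := lt_trans (div_pos hK h1γ) hR
  have hKR : K < R * (1 - γ) := (div_lt_iff₀ h1γ).mp hR
  have hcR : (0:ℝ) < (1 - γ) - K / R := by
    have : K / R < 1 - γ := by rw [div_lt_iff₀ hR0]; nlinarith
    linarith
  have mC : MeasurableSet C := by
    rw [hC]; exact measurableSet_le hf measurable_const
  -- nonnegative versions
  set gf : 𝓧 → ℝ≥0∞ := fun z => ENNReal.ofReal (f z) with hgf_def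
  set gp : 𝓧 → ℝ≥0∞ := fun z => ENNReal.ofReal (φ z) with hgp_def
  set gm : 𝓧 → ℝ≥0∞ := fun z => ENNReal.ofReal (-φ z) with hgm_def
  set gV : 𝓧 → ℝ≥0∞ := fun z => ENNReal.ofReal (V z) with hgV_def
  have hmgf : Measurable gf := hf.ennreal_ofReal
  have hmgp : Measurable gp := hφm.ennreal_ofReal
  have hmgm : Measurable gm := hφm.neg.ennreal_ofReal
  have hmgV : Measurable gV := hV.ennreal_ofReal
  have hgp_le : gp ≤ gf := fun z =>
    ENNReal.ofReal_le_ofReal ((le_abs_self _).trans (hφ z))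
  have hgm_le : gm ≤ gf := fun z =>
    ENNReal.ofReal_le_ofReal ((neg_le_abs _).trans (hφ z))
  -- invariance of π in lintegral form
  have key : ∀ g : 𝓧 → ℝ≥0∞, Measurable g →
      ∫⁻ z, g z ∂π = ∫⁻ x, PlOp P g x ∂π := by
    intro g hg
    conv_lhs => rw [← hinv]
    exact Measure.lintegral_bind P.measurable.aemeasurable hg.aemeasurable
  -- decomposition identity
  have decomp : ∀ g : 𝓧 → ℝ≥0∞, Measurable g → ∀ n : ℕ,
      ∫⁻ z, g z ∂π = (∑ k ∈ Finset.range n, ∫⁻ x in C, PlOp P (gseq P C g k) x ∂π)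
        + ∫⁻ x, gseq P C g n x ∂π := by
    intro g hg n
    induction n with
    | zero => simp [gseq]
    | succ n ih =>
        rw [ih, Finset.sum_range_succ]
        have h1 : ∫⁻ x, gseq P C g n x ∂π = ∫⁻ x, PlOp P (gseq P C g n) x ∂π :=
          key _ (gseq_measurable P mC hg n)
        have h2 : ∫⁻ x, PlOp P (gseq P C g n) x ∂π
            = ∫⁻ x in C, PlOp P (gseq P C g n) x ∂π
              + ∫⁻ x in Cᶜ, PlOp P (gseq P C g n) x ∂π :=
          (lintegral_add_compl _ mC).symm
        have h3 : ∫⁻ x in Cᶜ, PlOp P (gseq P C g n) x ∂π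
            = ∫⁻ x, gseq P C g (n+1) x ∂π := by
          rw [← lintegral_indicator mC.compl]
          rfl
        rw [h1, h2, h3, add_assoc]
  -- monotonicity of total mass under the sub-Markov evolution
  have rho_step : ∀ g : 𝓧 → ℝ≥0∞, Measurable g → ∀ n : ℕ,
      ∫⁻ x, gseq P C g (n+1) x ∂π ≤ ∫⁻ x, gseq P C g n x ∂π := by
    intro g hg n
    have h1 : ∫⁻ x, gseq P C g (n+1) x ∂π
        ≤ ∫⁻ x, PlOp P (gseq P C g n) x ∂π := by
      apply lintegral_mono
      intro x
      exact Set.indicator_le_self _ _ x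
    rw [← key _ (gseq_measurable P mC hg n)] at h1
    exact h1
  have rho_anti : ∀ g : 𝓧 → ℝ≥0∞, Measurable g →
      Antitone (fun n => ∫⁻ x, gseq P C g n x ∂π) := by
    intro g hg
    exact antitone_nat_of_succ_le (fun n => rho_step g hg n)
  have rho_le : ∀ g : 𝓧 → ℝ≥0∞, Measurable g → ∀ n : ℕ,
      ∫⁻ x, gseq P C g n x ∂π ≤ ∫⁻ z, g z ∂π := by
    intro g hg n
    exact rho_anti g hg (Nat.zero_le n)
  -- Pl of V as a real integral
  have PlgV_eq : ∀ x, PlOp P gV x = ENNReal.ofReal (∫ y, V y ∂(P x)) := by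
    intro x
    rw [ofReal_integral_eq_lintegral_ofReal (hVint x)
      (Filter.Eventually.of_forall (fun y => le_trans zero_le_one (hV1 y)))]
    rfl
  -- drift inequality off C
  have hd1 : ∀ x, x ∈ Cᶜ →
      PlOp P gV x + ENNReal.ofReal ((1 - γ) - K / R) ≤ gV x := by
    intro x hx
    have hfx : R < f x := by
      rw [hC] at hx; simpa using hx
    have hreal : (∫ y, V y ∂(P x)) + ((1 - γ) - K / R) ≤ V x := by
      have hd := hdrift x
      have h2 : (1 - γ) - K / R ≤ (1 - γ) * f x - K := by
        rcases le_or_gt 1 R with hR1 | hR1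
        · have h3 : (1 - γ) * R - K ≤ (1 - γ) * f x - K := by nlinarith
          have h4 : (1 - γ) - K / R ≤ (1 - γ) * R - K := by
            have : ((1 - γ) - K / R) * R = (1 - γ) * R - K := by
              field_simp
            nlinarith [mul_le_mul_of_nonneg_left (sub_le_sub_left (le_refl (K/R)) (1-γ)) (le_of_lt hR0)]
          linarith
        · have hf1x := hf1 x
          have h3 : (1 - γ) - K ≤ (1 - γ) * f x - K := by nlinarith
          have h4 : K ≤ K / R := by
            rw [le_div_iff₀ hR0]; nlinarith
          linarith
      linarith
    rw [PlgV_eq, ← ENNReal.ofReal_add (integral_nonneg (fun y => le_trans zero_le_one (hV1 y))) (le_of_lt hcR)]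
    exact ENNReal.ofReal_le_ofReal hreal
  -- truncated drift inequality
  have hd2 : ∀ M : ℝ, 0 ≤ M → ∀ x,
      PlOp P (fun z => min (gV z) (ENNReal.ofReal M)) x
        + ({z | V z ≤ M}.indicator (fun z => ENNReal.ofReal ((1 - γ) * f z)) x)
      ≤ min (gV x) (ENNReal.ofReal M) + ENNReal.ofReal K := by
    intro M hM x
    by_cases hxM : V x ≤ M
    · have hmin : min (gV x) (ENNReal.ofReal M) = gV x := by
        rw [min_eq_left]; exact ENNReal.ofReal_le_ofReal hxM
      rw [hmin, Set.indicator_of_mem (by exact hxM)]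
      have h1 : PlOp P (fun z => min (gV z) (ENNReal.ofReal M)) x ≤ PlOp P gV x :=
        PlOp_mono P (fun z => min_le_left _ _) x
      have h2 : PlOp P gV x + ENNReal.ofReal ((1 - γ) * f x)
          ≤ gV x + ENNReal.ofReal K := by
        rw [PlgV_eq, ← ENNReal.ofReal_add (integral_nonneg (fun y => le_trans zero_le_one (hV1 y)))
          (mul_nonneg h1γ.le (by linarith [hf1 x])), hgV_def, ← ENNReal.ofReal_add (by linarith [hV1 x]) (le_of_lt hK)]
        apply ENNReal.ofReal_le_ofReal
        have := hdrift x
        linarith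
      calc PlOp P (fun z => min (gV z) (ENNReal.ofReal M)) x + ENNReal.ofReal ((1 - γ) * f x)
          ≤ PlOp P gV x + ENNReal.ofReal ((1 - γ) * f x) := add_le_add_left h1 _
        _ ≤ gV x + ENNReal.ofReal K := h2
    · rw [Set.indicator_of_notMem (by exact hxM)]
      have hmin : min (gV x) (ENNReal.ofReal M) = ENNReal.ofReal M := by
        rw [min_eq_right]; exact ENNReal.ofReal_le_ofReal (by linarith)
      rw [hmin, add_zero]
      have h1 : PlOp P (fun z => min (gV z) (ENNReal.ofReal M)) x ≤ ENNReal.ofReal M := by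
        have h2 : PlOp P (fun z => min (gV z) (ENNReal.ofReal M)) x
            ≤ PlOp P (fun _ => ENNReal.ofReal M) x :=
          PlOp_mono P (fun z => min_le_right _ _) x
        have h3 : PlOp P (fun _ => ENNReal.ofReal M) x = ENNReal.ofReal M := by
          simp [PlOp, lintegral_const]
        rw [h3] at h2; exact h2
      exact le_trans h1 (le_add_right (le_refl _))
  -- integrability of f with respect to π
  have htrunc : ∀ n : ℕ,
      ∫⁻ z, {z | V z ≤ (n:ℝ)}.indicator (fun z => ENNReal.ofReal ((1 - γ) * f z)) z ∂π
        ≤ ENNReal.ofReal K := by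
    intro n
    set hmin : 𝓧 → ℝ≥0∞ := fun z => min (gV z) (ENNReal.ofReal (n:ℝ)) with hmin_def
    have hmmin : Measurable hmin := hmgV.min measurable_const
    have hmind : Measurable
        ({z | V z ≤ (n:ℝ)}.indicator (fun z => ENNReal.ofReal ((1 - γ) * f z))) := by
      apply Measurable.indicator
      · exact (hf.const_mul _).ennreal_ofReal.comp measurable_id |>.mono le_rfl le_rfl
      · exact measurableSet_le hV measurable_const
    have hsum : ∫⁻ z, hmin z ∂π
        + ∫⁻ z, {z | V z ≤ (n:ℝ)}.indicator (fun z => ENNReal.ofReal ((1 - γ) * f z)) z ∂π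
        ≤ ∫⁻ z, hmin z ∂π + ENNReal.ofReal K := by
      have h1 : ∫⁻ x, (PlOp P hmin x
          + {z | V z ≤ (n:ℝ)}.indicator (fun z => ENNReal.ofReal ((1 - γ) * f z)) x) ∂π
          ≤ ∫⁻ x, (hmin x + ENNReal.ofReal K) ∂π :=
        lintegral_mono (fun x => hd2 (n:ℝ) (Nat.cast_nonneg n) x)
      rw [lintegral_add_left (measurable_PlOp P hmmin), lintegral_add_right _ measurable_const,
        lintegral_const] at h1
      have h2 : ∫⁻ x, PlOp P hmin x ∂π = ∫⁻ z, hmin z ∂π := (key hmin hmmin).symm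
      rw [h2] at h1
      simpa using h1
    have hfin : ∫⁻ z, hmin z ∂π ≠ ⊤ := by
      have : ∫⁻ z, hmin z ∂π ≤ ∫⁻ _, ENNReal.ofReal (n:ℝ) ∂π :=
        lintegral_mono (fun z => min_le_right _ _)
      rw [lintegral_const] at this
      exact ne_top_of_le_ne_top (by simp) this
    exact (ENNReal.add_le_add_iff_left hfin).mp hsum
  have hfK : ∫⁻ z, ENNReal.ofReal ((1 - γ) * f z) ∂π ≤ ENNReal.ofReal K := by
    have hmono : Monotone (fun n : ℕ =>
        fun z => {z | V z ≤ (n:ℝ)}.indicator (fun z => ENNReal.ofReal ((1 - γ) * f z)) z) := by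
      intro a b hab z
      apply Set.indicator_le_indicator_of_subset
      · intro w hw
        simp only [Set.mem_setOf_eq] at hw ⊢
        exact hw.trans (by exact_mod_cast hab)
      · intro w; exact zero_le
    have hsup : ∀ z, (⨆ n : ℕ, {z | V z ≤ (n:ℝ)}.indicator
        (fun z => ENNReal.ofReal ((1 - γ) * f z)) z) = ENNReal.ofReal ((1 - γ) * f z) := by
      intro z
      apply le_antisymm
      · exact iSup_le (fun n => Set.indicator_le_self _ _ z)
      · obtain ⟨n, hn⟩ := exists_nat_ge (V z)
        calc ENNReal.ofReal ((1 - γ) * f z)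
            = {z | V z ≤ (n:ℝ)}.indicator (fun z => ENNReal.ofReal ((1 - γ) * f z)) z :=
              by
              rw [Set.indicator_of_mem (show z ∈ {w | V w ≤ (n:ℝ)} from hn)]
          _ ≤ _ := le_iSup (fun n : ℕ => {z | V z ≤ (n:ℝ)}.indicator
              (fun z => ENNReal.ofReal ((1 - γ) * f z)) z) n
    have hmeas : ∀ n : ℕ, Measurable (fun z =>
        {z | V z ≤ (n:ℝ)}.indicator (fun z => ENNReal.ofReal ((1 - γ) * f z)) z) := by
      intro n
      exact ((hf.const_mul _).ennreal_ofReal).indicator (measurableSet_le hV measurable_const)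
    calc ∫⁻ z, ENNReal.ofReal ((1 - γ) * f z) ∂π
        = ∫⁻ z, ⨆ n : ℕ, {z | V z ≤ (n:ℝ)}.indicator
            (fun z => ENNReal.ofReal ((1 - γ) * f z)) z ∂π := by
          apply lintegral_congr; intro z; rw [hsup z]
      _ = ⨆ n : ℕ, ∫⁻ z, {z | V z ≤ (n:ℝ)}.indicator
            (fun z => ENNReal.ofReal ((1 - γ) * f z)) z ∂π := lintegral_iSup hmeas hmono
      _ ≤ ENNReal.ofReal K := iSup_le htrunc
  have hgf_fin : ∫⁻ z, gf z ∂π ≠ ⊤ := by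
    have h1 : ∀ z, ENNReal.ofReal ((1 - γ) * f z) = ENNReal.ofReal (1 - γ) * gf z := by
      intro z; rw [ENNReal.ofReal_mul h1γ.le]
    have h2 : ENNReal.ofReal (1 - γ) * ∫⁻ z, gf z ∂π ≤ ENNReal.ofReal K := by
      rw [← lintegral_const_mul _ hmgf]
      calc ∫⁻ z, ENNReal.ofReal (1 - γ) * gf z ∂π
          = ∫⁻ z, ENNReal.ofReal ((1 - γ) * f z) ∂π := by
            apply lintegral_congr; intro z; rw [h1 z]
        _ ≤ ENNReal.ofReal K := hfK
    intro hcon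
    rw [hcon, ENNReal.mul_top (by simp [ENNReal.ofReal_eq_zero]; linarith)] at h2
    exact (by simp : ¬ (⊤ : ℝ≥0∞) ≤ ENNReal.ofReal K) h2
  have hgp_fin : ∫⁻ z, gp z ∂π ≠ ⊤ :=
    ne_top_of_le_ne_top hgf_fin (lintegral_mono hgp_le)
  have hgm_fin : ∫⁻ z, gm z ∂π ≠ ⊤ :=
    ne_top_of_le_ne_top hgf_fin (lintegral_mono hgm_le)
  -- first conjunct : integrability of φ
  have hφint : Integrable φ π := by
    refine ⟨hφm.aestronglyMeasurable, ?_⟩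
    show (∫⁻ z, (‖φ z‖₊ : ℝ≥0∞) ∂π) < ⊤
    calc ∫⁻ z, (‖φ z‖₊ : ℝ≥0∞) ∂π = ∫⁻ z, ENNReal.ofReal |φ z| ∂π := by
          apply lintegral_congr; intro z; rw [← enorm_eq_nnnorm, Real.enorm_eq_ofReal_abs]
      _ ≤ ∫⁻ z, gf z ∂π := lintegral_mono (fun z => ENNReal.ofReal_le_ofReal (hφ z))
      _ < ⊤ := lt_top_iff_ne_top.mpr hgf_fin
  -- the avoidance probability sequence
  set u : ℕ → 𝓧 → ℝ≥0∞ := gseq P C (fun _ => 1) with hu_def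
  have hmu : ∀ n, Measurable (u n) := gseq_measurable P mC measurable_const
  have hu0 : u 0 = fun _ => 1 := rfl
  have hu_le_one : ∀ n x, u n x ≤ 1 := by
    intro n
    induction n with
    | zero => intro x; exact le_refl _
    | succ n ih =>
        intro x
        show Cᶜ.indicator (PlOp P (u n)) x ≤ 1
        apply le_trans (Set.indicator_le_self _ _ x)
        calc PlOp P (u n) x ≤ PlOp P (fun _ => 1) x := PlOp_mono P (fun y => ih y) x
          _ = 1 := by simp [PlOp, lintegral_const]
  have hu_anti : Antitone u := by
    apply antitone_nat_of_succ_le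
    intro n
    induction n with
    | zero =>
        intro x
        exact hu_le_one 1 x
    | succ n ih =>
        intro x
        show Cᶜ.indicator (PlOp P (u (n+1))) x ≤ Cᶜ.indicator (PlOp P (u n)) x
        exact Set.indicator_le_indicator (PlOp_mono P ih x)
  set ui : 𝓧 → ℝ≥0∞ := fun x => ⨅ n, u n x with hui_def
  have hmui : Measurable ui := Measurable.iInf hmu
  have hui_le_one : ∀ x, ui x ≤ 1 := fun x => (iInf_le _ 0).trans (le_refl _)
  have hPl_ui : ∀ x, PlOp P ui x = ⨅ n, PlOp P (u n) x := by
    intro x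
    have := lintegral_iInf (μ := P x) hmu hu_anti (by
      rw [hu0]; simp [lintegral_const])
    exact this
  have hfix : ∀ x, ui x = Cᶜ.indicator (PlOp P ui) x := by
    intro x
    have h1 : ui x = ⨅ n, u (n+1) x := by
      apply le_antisymm
      · exact le_iInf (fun n => iInf_le _ (n+1))
      · exact le_iInf (fun n => (iInf_le _ n).trans (hu_anti (Nat.le_succ n) x))
    rw [h1]
    have h2 : ∀ n, u (n+1) x = Cᶜ.indicator (PlOp P (u n)) x := fun n => rfl
    by_cases hx : x ∈ Cᶜ
    · calc ⨅ n, u (n+1) x = ⨅ n, PlOp P (u n) x := by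
            apply iInf_congr; intro n; rw [h2 n, Set.indicator_of_mem hx]
        _ = PlOp P ui x := (hPl_ui x).symm
        _ = Cᶜ.indicator (PlOp P ui) x := (Set.indicator_of_mem hx _).symm
    · calc ⨅ n, u (n+1) x = ⨅ n : ℕ, (0:ℝ≥0∞) := by
            apply iInf_congr; intro n; rw [h2 n, Set.indicator_of_notMem hx]
        _ = 0 := by simp
        _ = Cᶜ.indicator (PlOp P ui) x := (Set.indicator_of_notMem hx _).symm
  have hind : ∀ n : ℕ, ∀ x, (n : ℝ≥0∞) * ENNReal.ofReal ((1 - γ) - K / R) * ui x ≤ gV x := by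
    intro n
    induction n with
    | zero => intro x; simp
    | succ n ih =>
        intro x
        by_cases hx : x ∈ Cᶜ
        · have hx1 : ui x = PlOp P ui x := by
            rw [hfix x, Set.indicator_of_mem hx]
          have h1 : (n : ℝ≥0∞) * ENNReal.ofReal ((1 - γ) - K / R) * ui x
              ≤ PlOp P gV x := by
            rw [hx1]
            calc (n : ℝ≥0∞) * ENNReal.ofReal ((1 - γ) - K / R) * PlOp P ui x
                = PlOp P (fun y => (n : ℝ≥0∞) * ENNReal.ofReal ((1 - γ) - K / R) * ui y) x :=
                  (lintegral_const_mul _ hmui).symm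
              _ ≤ PlOp P gV x := PlOp_mono P (fun y => ih y) x
          have h2 : ENNReal.ofReal ((1 - γ) - K / R) * ui x
              ≤ ENNReal.ofReal ((1 - γ) - K / R) := by
            calc ENNReal.ofReal ((1 - γ) - K / R) * ui x
                ≤ ENNReal.ofReal ((1 - γ) - K / R) * 1 :=
                  mul_le_mul_right (hui_le_one x) _
              _ = _ := mul_one _
          have hcast : ((n+1 : ℕ) : ℝ≥0∞) * ENNReal.ofReal ((1 - γ) - K / R) * ui x
              = (n : ℝ≥0∞) * ENNReal.ofReal ((1 - γ) - K / R) * ui x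
                + ENNReal.ofReal ((1 - γ) - K / R) * ui x := by
            push_cast
            ring
          rw [hcast]
          exact le_trans (add_le_add h1 h2) (hd1 x hx)
        · have : ui x = 0 := by rw [hfix x, Set.indicator_of_notMem hx]
          rw [this, mul_zero]
          exact zero_le
  have hui0 : ∀ x, ui x = 0 := by
    intro x
    by_contra hne
    set b : ℝ≥0∞ := ENNReal.ofReal ((1 - γ) - K / R) * ui x with hb_def
    have hb0 : b ≠ 0 := by
      apply mul_ne_zero
      · simp only [ne_eq, ENNReal.ofReal_eq_zero, not_le]; exact hcR
      · exact hne
    have hbtop : b ≠ ⊤ := by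
      apply ENNReal.mul_ne_top ENNReal.ofReal_ne_top
      exact ne_top_of_le_ne_top ENNReal.one_ne_top (hui_le_one x)
    have hgVtop : gV x ≠ ⊤ := ENNReal.ofReal_ne_top
    obtain ⟨n, hn⟩ := ENNReal.exists_nat_gt (ENNReal.div_lt_top hgVtop hb0).ne
    have h1 : gV x < n * b := by
      rw [← ENNReal.div_lt_iff (Or.inl hb0) (Or.inl hbtop)]
      exact hn
    have h2 : (n : ℝ≥0∞) * b ≤ gV x := by
      rw [hb_def, ← mul_assoc]
      exact hind n x
    exact absurd h2 (not_le.mpr h1)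
  have hu_inf : (⨅ n, ∫⁻ x, u n x ∂π) = 0 := by
    have h0 : ∫⁻ x, (⨅ n, u n x) ∂π = ⨅ n, ∫⁻ x, u n x ∂π :=
      lintegral_iInf hmu hu_anti (by rw [hu0]; simp [lintegral_const])
    rw [← h0]
    have h1 : ∀ x, (⨅ n, u n x) = (0:ℝ≥0∞) := hui0
    rw [lintegral_congr h1, lintegral_zero]
  -- tail of f is small
  set gM : ℕ → 𝓧 → ℝ≥0∞ := fun M z => {z | (M:ℝ) < f z}.indicator gf z with hgM_def
  have hmgM : ∀ M : ℕ, Measurable (gM M) :=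
    fun M => hmgf.indicator (measurableSet_lt measurable_const hf)
  have htail : (⨅ M : ℕ, ∫⁻ z, gM M z ∂π) = 0 := by
    have hanti : Antitone gM := by
      intro a b hab z
      apply Set.indicator_le_indicator_of_subset
      · intro w hw
        simp only [Set.mem_setOf_eq] at hw ⊢
        exact lt_of_le_of_lt (by exact_mod_cast hab) hw
      · intro w; exact zero_le
    have h0 : ∫⁻ z, (⨅ M, gM M z) ∂π = ⨅ M, ∫⁻ z, gM M z ∂π :=
      lintegral_iInf hmgM hanti
        (ne_top_of_le_ne_top hgf_fin (lintegral_mono (fun z => Set.indicator_le_self _ _ z)))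
    rw [← h0]
    have h1 : ∀ z, (⨅ M, gM M z) = (0:ℝ≥0∞) := by
      intro z
      apply le_antisymm _ (zero_le)
      obtain ⟨M, hM⟩ := exists_nat_ge (f z)
      calc (⨅ M, gM M z) ≤ gM M z := iInf_le _ M
        _ = 0 := Set.indicator_of_notMem
            (show z ∉ {w | (M:ℝ) < f w} by simp only [Set.mem_setOf_eq, not_lt]; exact hM) _
    rw [lintegral_congr h1, lintegral_zero]
  -- ρ_n(gf) bound via truncation
  have hbound : ∀ M : ℕ, ∀ n : ℕ,
      ∫⁻ x, gseq P C gf n x ∂π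
        ≤ (M:ℝ≥0∞) * ∫⁻ x, u n x ∂π + ∫⁻ z, gM M z ∂π := by
    intro M n
    have hle : gf ≤ (fun z => (M:ℝ≥0∞) * (fun _ => (1:ℝ≥0∞)) z) + gM M := by
      intro z
      by_cases hz : (M:ℝ) < f z
      · have heq : gM M z = gf z :=
          Set.indicator_of_mem (show z ∈ {w | (M:ℝ) < f w} from hz) _
        calc gf z = gM M z := heq.symm
          _ ≤ _ := le_add_self
      · push_neg at hz
        have hle1 : gf z ≤ (M:ℝ≥0∞) := by
          rw [← ENNReal.ofReal_natCast]
          exact ENNReal.ofReal_le_ofReal hz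
        calc gf z ≤ (M:ℝ≥0∞) := hle1
          _ = (M:ℝ≥0∞) * 1 := (mul_one _).symm
          _ ≤ _ := le_add_right (le_refl _)
    have h1 : ∀ x, gseq P C gf n x
        ≤ (M:ℝ≥0∞) * u n x + gseq P C (gM M) n x := by
      intro x
      calc gseq P C gf n x
          ≤ gseq P C ((fun z => (M:ℝ≥0∞) * (fun _ => (1:ℝ≥0∞)) z) + gM M) n x :=
            gseq_mono P C hle n x
        _ = gseq P C (fun z => (M:ℝ≥0∞) * (fun _ => (1:ℝ≥0∞)) z) n x
            + gseq P C (gM M) n x := by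
            rw [gseq_add P (measurable_const.const_mul _) (hmgM M) mC n]
            rfl
        _ = (M:ℝ≥0∞) * u n x + gseq P C (gM M) n x := by
            rw [gseq_smul P measurable_const mC ((M:ℝ≥0∞)) n]
    calc ∫⁻ x, gseq P C gf n x ∂π
        ≤ ∫⁻ x, ((M:ℝ≥0∞) * u n x + gseq P C (gM M) n x) ∂π := lintegral_mono h1
      _ = (M:ℝ≥0∞) * ∫⁻ x, u n x ∂π + ∫⁻ x, gseq P C (gM M) n x ∂π := by
          rw [lintegral_add_left ((hmu n).const_mul _), lintegral_const_mul _ (hmu n)]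
      _ ≤ (M:ℝ≥0∞) * ∫⁻ x, u n x ∂π + ∫⁻ z, gM M z ∂π :=
          add_le_add_right (rho_le (gM M) (hmgM M) n) _
  -- ρ_n(gf) → 0
  have hrho_f : (⨅ n, ∫⁻ x, gseq P C gf n x ∂π) = 0 := by
    apply le_antisymm _ (zero_le)
    apply ENNReal.le_of_forall_pos_le_add
    intro ε hε _
    rw [zero_add]
    have hε2 : (0:ℝ≥0∞) < (ε:ℝ≥0∞) / 2 := by
      apply ENNReal.div_pos (by exact_mod_cast hε.ne') (by simp)
    obtain ⟨M, hM⟩ : ∃ M : ℕ, ∫⁻ z, gM M z ∂π < (ε:ℝ≥0∞)/2 := by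
      rw [← iInf_lt_iff, htail]; exact hε2
    obtain ⟨n, hn⟩ : ∃ n : ℕ, ∫⁻ x, u n x ∂π < ((ε:ℝ≥0∞)/2) / ((M:ℝ≥0∞)+1) := by
      rw [← iInf_lt_iff, hu_inf]
      exact ENNReal.div_pos hε2.ne' (by simp [ENNReal.add_eq_top])
    have hM1 : ((M:ℝ≥0∞)+1) ≠ 0 := by simp
    have hM2 : ((M:ℝ≥0∞)+1) ≠ ⊤ := by simp [ENNReal.add_eq_top]
    calc (⨅ n, ∫⁻ x, gseq P C gf n x ∂π) ≤ ∫⁻ x, gseq P C gf n x ∂π := iInf_le _ n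
      _ ≤ (M:ℝ≥0∞) * ∫⁻ x, u n x ∂π + ∫⁻ z, gM M z ∂π := hbound M n
      _ ≤ ((M:ℝ≥0∞)+1) * (((ε:ℝ≥0∞)/2) / ((M:ℝ≥0∞)+1)) + (ε:ℝ≥0∞)/2 := by
          apply add_le_add
          · exact mul_le_mul' (le_add_right (le_refl _)) hn.le
          · exact hM.le
      _ = (ε:ℝ≥0∞)/2 + (ε:ℝ≥0∞)/2 := by
          rw [ENNReal.mul_div_cancel hM1 hM2]
      _ = (ε:ℝ≥0∞) := ENNReal.add_halves _
  -- the master identity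
  have master : ∀ g : 𝓧 → ℝ≥0∞, Measurable g → g ≤ gf →
      ∫⁻ z, g z ∂π = ∑' k, ∫⁻ x in C, PlOp P (gseq P C g k) x ∂π := by
    intro g hg hgle
    have hrho_g : (⨅ n, ∫⁻ x, gseq P C g n x ∂π) = 0 := by
      apply le_antisymm _ (zero_le)
      calc (⨅ n, ∫⁻ x, gseq P C g n x ∂π) ≤ ⨅ n, ∫⁻ x, gseq P C gf n x ∂π :=
          le_iInf (fun n => (iInf_le _ n).trans
            (lintegral_mono (fun x => gseq_mono P C hgle n x)))
        _ = 0 := hrho_f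
    apply le_antisymm
    · have h1 : ∀ n : ℕ, ∫⁻ z, g z ∂π
          ≤ (∑' k, ∫⁻ x in C, PlOp P (gseq P C g k) x ∂π) + ∫⁻ x, gseq P C g n x ∂π := by
        intro n
        rw [decomp g hg n]
        apply add_le_add_left
        rw [ENNReal.tsum_eq_iSup_nat]
        exact le_iSup (fun n => ∑ k ∈ Finset.range n, ∫⁻ x in C, PlOp P (gseq P C g k) x ∂π) n
      calc ∫⁻ z, g z ∂π
          ≤ ⨅ n, ((∑' k, ∫⁻ x in C, PlOp P (gseq P C g k) x ∂π)
              + ∫⁻ x, gseq P C g n x ∂π) := le_iInf h1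
        _ = (∑' k, ∫⁻ x in C, PlOp P (gseq P C g k) x ∂π)
              + ⨅ n, ∫⁻ x, gseq P C g n x ∂π := add_iInf.symm
        _ = ∑' k, ∫⁻ x in C, PlOp P (gseq P C g k) x ∂π := by rw [hrho_g, add_zero]
    · rw [ENNReal.tsum_eq_iSup_nat]
      apply iSup_le
      intro n
      rw [decomp g hg n]
      exact le_add_right (le_refl _)
  -- the summed kernels
  set Fp : 𝓧 → ℝ≥0∞ := fun x => ∑' m : ℕ, PlOp P (gseq P C gp m) x with hFp_def
  set Fm : 𝓧 → ℝ≥0∞ := fun x => ∑' m : ℕ, PlOp P (gseq P C gm m) x with hFm_def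
  set Ff : 𝓧 → ℝ≥0∞ := fun x => ∑' m : ℕ, PlOp P (gseq P C gf m) x with hFf_def
  have hmFp : Measurable Fp :=
    Measurable.ennreal_tsum (fun m => measurable_PlOp P (gseq_measurable P mC hmgp m))
  have hmFm : Measurable Fm :=
    Measurable.ennreal_tsum (fun m => measurable_PlOp P (gseq_measurable P mC hmgm m))
  have hmFf : Measurable Ff :=
    Measurable.ennreal_tsum (fun m => measurable_PlOp P (gseq_measurable P mC hmgf m))
  have hFp_int : ∫⁻ x in C, Fp x ∂π = ∫⁻ z, gp z ∂π := by
    rw [master gp hmgp hgp_le]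
    exact lintegral_tsum (fun m =>
      (measurable_PlOp P (gseq_measurable P mC hmgp m)).aemeasurable)
  have hFm_int : ∫⁻ x in C, Fm x ∂π = ∫⁻ z, gm z ∂π := by
    rw [master gm hmgm hgm_le]
    exact lintegral_tsum (fun m =>
      (measurable_PlOp P (gseq_measurable P mC hmgm m)).aemeasurable)
  have hFf_int : ∫⁻ x in C, Ff x ∂π = ∫⁻ z, gf z ∂π := by
    rw [master gf hmgf (le_refl _)]
    exact lintegral_tsum (fun m =>
      (measurable_PlOp P (gseq_measurable P mC hmgf m)).aemeasurable)
  have hFf_ae : ∀ᵐ x ∂(π.restrict C), Ff x < ⊤ :=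
    ae_lt_top hmFf (by rw [hFf_int]; exact hgf_fin)
  have hFp_le_Ff : ∀ x, Fp x ≤ Ff x := fun x =>
    ENNReal.tsum_le_tsum (fun m => PlOp_mono P (gseq_mono P C hgp_le m) x)
  have hFm_le_Ff : ∀ x, Fm x ≤ Ff x := fun x =>
    ENNReal.tsum_le_tsum (fun m => PlOp_mono P (gseq_mono P C hgm_le m) x)
  -- the sets in the statement
  have hAm : ∀ m : ℕ, {ω' : ℕ → 𝓧 | 1 ≤ m+1 ∧ ∀ j, 1 ≤ j → j < m+1 → ω' j ∉ C}
      = avoidSet C (m+1) := by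
    intro m
    ext ω
    simp only [Set.mem_setOf_eq, avoidSet, Nat.succ_le_succ_iff, Nat.zero_le, true_and]
  have hA0 : {ω' : ℕ → 𝓧 | 1 ≤ 0 ∧ ∀ j, 1 ≤ j → j < 0 → ω' j ∉ C} = (∅ : Set (ℕ → 𝓧)) := by
    ext ω; simp
  -- inner integral identity
  have h_inner : ∀ᵐ x ∂(π.restrict C),
      (∫ ω, (∑' k : ℕ,
          Set.indicator {ω' : ℕ → 𝓧 | 1 ≤ k ∧ ∀ j, 1 ≤ j → j < k → ω' j ∉ C}
            (fun ω' => φ (ω' k)) ω) ∂(Pr x)) = (Fp x).toReal - (Fm x).toReal := by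
    filter_upwards [hFf_ae] with x hx
    have := hprob x
    set a : ℕ → (ℕ → 𝓧) → ℝ := fun k ω =>
      Set.indicator {ω' : ℕ → 𝓧 | 1 ≤ k ∧ ∀ j, 1 ≤ j → j < k → ω' j ∉ C}
        (fun ω' => φ (ω' k)) ω with ha_def
    have hAmeas : ∀ k : ℕ, MeasurableSet
        {ω' : ℕ → 𝓧 | 1 ≤ k ∧ ∀ j, 1 ≤ j → j < k → ω' j ∉ C} := by
      intro k
      cases k with
      | zero => rw [hA0]; exact MeasurableSet.empty
      | succ m => rw [hAm m]; exact avoidSet_measurable mC (m+1)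
    have hameas : ∀ k, Measurable (a k) := fun k =>
      (hφm.comp (measurable_pi_apply k)).indicator (hAmeas k)
    have ha0 : ∀ ω, a 0 ω = 0 := by
      intro ω; rw [ha_def]; simp [hA0]
    -- positive parts
    have hbp : ∀ m : ℕ, ∫⁻ ω, ENNReal.ofReal (a (m+1) ω) ∂(Pr x)
        = PlOp P (gseq P C gp m) x := by
      intro m
      have h1 : ∀ ω, ENNReal.ofReal (a (m+1) ω)
          = (avoidSet C (m+1)).indicator (fun ω => gp (ω (m+1))) ω := by
        intro ω
        rw [ha_def]
        simp only [hAm m]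
        by_cases hω : ω ∈ avoidSet C (m+1)
        · rw [Set.indicator_of_mem hω, Set.indicator_of_mem hω]
        · rw [Set.indicator_of_notMem hω, Set.indicator_of_notMem hω, ENNReal.ofReal_zero]
      rw [lintegral_congr h1, lintegral_indicator (avoidSet_measurable mC (m+1))]
      exact markov_rep P mC Pr hprob hstart hMarkov x m gp hmgp
    have hbm : ∀ m : ℕ, ∫⁻ ω, ENNReal.ofReal (-(a (m+1) ω)) ∂(Pr x)
        = PlOp P (gseq P C gm m) x := by
      intro m
      have h1 : ∀ ω, ENNReal.ofReal (-(a (m+1) ω))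
          = (avoidSet C (m+1)).indicator (fun ω => gm (ω (m+1))) ω := by
        intro ω
        rw [ha_def]
        simp only [hAm m]
        by_cases hω : ω ∈ avoidSet C (m+1)
        · rw [Set.indicator_of_mem hω, Set.indicator_of_mem hω]
        · rw [Set.indicator_of_notMem hω, Set.indicator_of_notMem hω, neg_zero,
            ENNReal.ofReal_zero]
      rw [lintegral_congr h1, lintegral_indicator (avoidSet_measurable mC (m+1))]
      exact markov_rep P mC Pr hprob hstart hMarkov x m gm hmgm
    have hnb : ∀ m : ℕ, ∫⁻ ω, (‖a (m+1) ω‖₊ : ℝ≥0∞) ∂(Pr x)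
        ≤ PlOp P (gseq P C gf m) x := by
      intro m
      have h1 : ∀ ω, (‖a (m+1) ω‖₊ : ℝ≥0∞)
          ≤ (avoidSet C (m+1)).indicator (fun ω => gf (ω (m+1))) ω := by
        intro ω
        rw [ha_def, ← enorm_eq_nnnorm, Real.enorm_eq_ofReal_abs]
        simp only [hAm m]
        by_cases hω : ω ∈ avoidSet C (m+1)
        · rw [Set.indicator_of_mem hω, Set.indicator_of_mem hω]
          exact ENNReal.ofReal_le_ofReal (hφ _)
        · rw [Set.indicator_of_notMem hω, Set.indicator_of_notMem hω, abs_zero,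
            ENNReal.ofReal_zero]
      calc ∫⁻ ω, (‖a (m+1) ω‖₊ : ℝ≥0∞) ∂(Pr x)
          ≤ ∫⁻ ω, (avoidSet C (m+1)).indicator (fun ω => gf (ω (m+1))) ω ∂(Pr x) :=
            lintegral_mono h1
        _ = ∫⁻ ω in avoidSet C (m+1), gf (ω (m+1)) ∂(Pr x) :=
            lintegral_indicator (avoidSet_measurable mC (m+1)) _
        _ = PlOp P (gseq P C gf m) x :=
            markov_rep P mC Pr hprob hstart hMarkov x m gf hmgf
    have htsum_norm : (∑' k : ℕ, ∫⁻ ω, (‖a k ω‖₊ : ℝ≥0∞) ∂(Pr x)) ≤ Ff x := by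
      rw [tsum_eq_zero_add' ENNReal.summable]
      have h0 : ∫⁻ ω, (‖a 0 ω‖₊ : ℝ≥0∞) ∂(Pr x) = 0 := by
        have : ∀ ω : ℕ → 𝓧, (‖a 0 ω‖₊ : ℝ≥0∞) = 0 := by
          intro ω; rw [ha0 ω]; simp
        rw [lintegral_congr this, lintegral_zero]
      rw [h0, zero_add]
      exact ENNReal.tsum_le_tsum hnb
    have htn : (∑' k : ℕ, ∫⁻ ω, (‖a k ω‖₊ : ℝ≥0∞) ∂(Pr x)) ≠ ⊤ :=
      (lt_of_le_of_lt htsum_norm hx).ne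
    have hInt : ∀ k, Integrable (a k) (Pr x) := by
      intro k
      refine ⟨(hameas k).aestronglyMeasurable, ?_⟩
      show (∫⁻ ω, (‖a k ω‖₊ : ℝ≥0∞) ∂(Pr x)) < ⊤
      exact lt_of_le_of_lt (ENNReal.le_tsum k) (lt_of_le_of_lt htsum_norm hx)
    have hstepA : ∫ ω, (∑' k : ℕ, a k ω) ∂(Pr x) = ∑' k : ℕ, ∫ ω, a k ω ∂(Pr x) :=
      integral_tsum (fun k => (hameas k).aestronglyMeasurable) htn
    set bp : ℕ → ℝ≥0∞ := fun k => ∫⁻ ω, ENNReal.ofReal (a k ω) ∂(Pr x) with hbp_def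
    set bm : ℕ → ℝ≥0∞ := fun k => ∫⁻ ω, ENNReal.ofReal (-(a k ω)) ∂(Pr x) with hbm_def
    have hstepB : ∀ k, ∫ ω, a k ω ∂(Pr x) = (bp k).toReal - (bm k).toReal := fun k =>
      integral_eq_lintegral_pos_part_sub_lintegral_neg_part (hInt k)
    have hbp0 : bp 0 = 0 := by
      rw [hbp_def]
      have : ∀ ω : ℕ → 𝓧, ENNReal.ofReal (a 0 ω) = 0 := by
        intro ω; rw [ha0 ω]; simp
      show ∫⁻ ω, ENNReal.ofReal (a 0 ω) ∂(Pr x) = 0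
      rw [lintegral_congr this, lintegral_zero]
    have hbm0 : bm 0 = 0 := by
      rw [hbm_def]
      have : ∀ ω : ℕ → 𝓧, ENNReal.ofReal (-(a 0 ω)) = 0 := by
        intro ω; rw [ha0 ω]; simp
      show ∫⁻ ω, ENNReal.ofReal (-(a 0 ω)) ∂(Pr x) = 0
      rw [lintegral_congr this, lintegral_zero]
    have hbp_sum : (∑' k, bp k) = Fp x := by
      rw [tsum_eq_zero_add' ENNReal.summable, hbp0, zero_add, hFp_def]
      exact tsum_congr (fun m => hbp m)
    have hbm_sum : (∑' k, bm k) = Fm x := by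
      rw [tsum_eq_zero_add' ENNReal.summable, hbm0, zero_add, hFm_def]
      exact tsum_congr (fun m => hbm m)
    have hbp_ne : (∑' k, bp k) ≠ ⊤ := by
      rw [hbp_sum]; exact (lt_of_le_of_lt (hFp_le_Ff x) hx).ne
    have hbm_ne : (∑' k, bm k) ≠ ⊤ := by
      rw [hbm_sum]; exact (lt_of_le_of_lt (hFm_le_Ff x) hx).ne
    have hbpk_ne : ∀ k, bp k ≠ ⊤ := fun k => ne_top_of_le_ne_top hbp_ne (ENNReal.le_tsum k)
    have hbmk_ne : ∀ k, bm k ≠ ⊤ := fun k => ne_top_of_le_ne_top hbm_ne (ENNReal.le_tsum k)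
    calc ∫ ω, (∑' k : ℕ,
          Set.indicator {ω' : ℕ → 𝓧 | 1 ≤ k ∧ ∀ j, 1 ≤ j → j < k → ω' j ∉ C}
            (fun ω' => φ (ω' k)) ω) ∂(Pr x)
        = ∑' k : ℕ, ∫ ω, a k ω ∂(Pr x) := hstepA
      _ = ∑' k : ℕ, ((bp k).toReal - (bm k).toReal) := tsum_congr hstepB
      _ = (∑' k : ℕ, (bp k).toReal) - ∑' k : ℕ, (bm k).toReal :=
          Summable.tsum_sub (ENNReal.summable_toReal hbp_ne) (ENNReal.summable_toReal hbm_ne)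
      _ = (∑' k, bp k).toReal - (∑' k, bm k).toReal := by
          rw [ENNReal.tsum_toReal_eq hbpk_ne, ENNReal.tsum_toReal_eq hbmk_ne]
      _ = (Fp x).toReal - (Fm x).toReal := by rw [hbp_sum, hbm_sum]
  -- outer integral
  have hFp_ae : ∀ᵐ x ∂(π.restrict C), Fp x < ⊤ := by
    filter_upwards [hFf_ae] with x hx
    exact lt_of_le_of_lt (hFp_le_Ff x) hx
  have hFm_ae : ∀ᵐ x ∂(π.restrict C), Fm x < ⊤ := by
    filter_upwards [hFf_ae] with x hx
    exact lt_of_le_of_lt (hFm_le_Ff x) hx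
  have hIntFp : Integrable (fun x => (Fp x).toReal) (π.restrict C) :=
    integrable_toReal_of_lintegral_ne_top hmFp.aemeasurable
      (by rw [hFp_int]; exact hgp_fin)
  have hIntFm : Integrable (fun x => (Fm x).toReal) (π.restrict C) :=
    integrable_toReal_of_lintegral_ne_top hmFm.aemeasurable
      (by rw [hFm_int]; exact hgm_fin)
  refine ⟨hφint, ?_⟩
  calc ∫ x in C, (∫ ω, (∑' k : ℕ,
          Set.indicator {ω' : ℕ → 𝓧 | 1 ≤ k ∧ ∀ j, 1 ≤ j → j < k → ω' j ∉ C}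
            (fun ω' => φ (ω' k)) ω) ∂(Pr x)) ∂π
      = ∫ x in C, ((Fp x).toReal - (Fm x).toReal) ∂π := integral_congr_ae h_inner
    _ = (∫ x in C, (Fp x).toReal ∂π) - ∫ x in C, (Fm x).toReal ∂π :=
        integral_sub hIntFp hIntFm
    _ = (∫⁻ x in C, Fp x ∂π).toReal - (∫⁻ x in C, Fm x ∂π).toReal := by
        rw [integral_toReal hmFp.aemeasurable hFp_ae, integral_toReal hmFm.aemeasurable hFm_ae]
    _ = (∫⁻ z, gp z ∂π).toReal - (∫⁻ z, gm z ∂π).toReal := by rw [hFp_int, hFm_int]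
    _ = ∫ z, φ z ∂π := by
        rw [integral_eq_lintegral_pos_part_sub_lintegral_neg_part hφint]
end

section
/- Under the multiplicative drift condition log[(P exp(V))(x)] ≤ V(x) - (1-γ) f(x) + K, set C = {x : f(x) ≤ R} with R > K/(1-γ) and γ_R = γ + K/R. Then for every x ∈ C, E[exp((1-γ_R) Σ_{k=1}^{τ_C} f(X_k)) | X_0 = x] ≤ exp(V(x) - (1-γ) f(x) + 2K). -/
open MeasureTheory ProbabilityTheory ENNReal Topology

namespace MDriftAux
variable {𝓧 : Type*} [MeasurableSpace 𝓧]

noncomputable def T (f : 𝓧 → ℝ) (m : ℕ) (ω : ℕ → 𝓧) : ℝ := ∑ k ∈ Finset.Icc 1 m, f (ω k)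

def A (C : Set 𝓧) (n : ℕ) : Set (ℕ → 𝓧) := {ω | ∀ j, 1 ≤ j → j < n + 1 → ω j ∉ C}

def stopAt (C : Set 𝓧) (m : ℕ) : Set (ℕ → 𝓧) := {ω | (∀ j, 1 ≤ j → j < m → ω j ∉ C) ∧ ω m ∈ C}

noncomputable def StopP (C : Set 𝓧) (f V : 𝓧 → ℝ) (a : ℝ) (n : ℕ) (ω : ℕ → 𝓧) : ℝ≥0∞ :=
  ∑ m ∈ Finset.Icc 1 n, Set.indicator (stopAt C m)
      (fun ω' => ENNReal.ofReal (Real.exp (a * T f (m-1) ω' + V (ω' m)))) ω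

noncomputable def Cont (C : Set 𝓧) (f V : 𝓧 → ℝ) (a : ℝ) (n : ℕ) (ω : ℕ → 𝓧) : ℝ≥0∞ :=
  Set.indicator (A C n) (fun ω' => ENNReal.ofReal (Real.exp (a * T f (n-1) ω' + V (ω' n)))) ω

noncomputable def U (C : Set 𝓧) (f V : 𝓧 → ℝ) (a : ℝ) (n : ℕ) (ω : ℕ → 𝓧) : ℝ≥0∞ :=
  StopP C f V a n ω + Cont C f V a n ω

noncomputable def term (C : Set 𝓧) (f : 𝓧 → ℝ) (k : ℕ) (ω : ℕ → 𝓧) : ℝ :=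
  Set.indicator {ω' : ℕ → 𝓧 | 1 ≤ k ∧ ∀ j, 1 ≤ j → j < k → ω' j ∉ C} (fun ω' => f (ω' k)) ω

noncomputable def S (C : Set 𝓧) (f : 𝓧 → ℝ) (n : ℕ) (ω : ℕ → 𝓧) : ℝ :=
  ∑ k ∈ Finset.range n, term C f k ω

variable {C : Set 𝓧} {f V : 𝓧 → ℝ} {a : ℝ}

omit [MeasurableSpace 𝓧] in
lemma T_zero (ω : ℕ → 𝓧) : T f 0 ω = 0 := by simp [T]

omit [MeasurableSpace 𝓧] in
lemma T_succ (m : ℕ) (ω : ℕ → 𝓧) : T f (m+1) ω = T f m ω + f (ω (m+1)) := by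
  simp [T, Finset.sum_Icc_succ_top (by omega : 1 ≤ m+1)]

omit [MeasurableSpace 𝓧] in
lemma term_nonneg (hf0 : ∀ z, 0 ≤ f z) (k : ℕ) (ω : ℕ → 𝓧) : 0 ≤ term C f k ω :=
  Set.indicator_nonneg (fun ω' _ => hf0 (ω' k)) ω

omit [MeasurableSpace 𝓧] in
lemma S_mono (hf0 : ∀ z, 0 ≤ f z) (ω : ℕ → 𝓧) : Monotone (fun n => S C f n ω) := by
  intro i j hij
  exact Finset.sum_le_sum_of_subset_of_nonneg (Finset.range_subset_range.mpr hij)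
    (fun k _ _ => term_nonneg hf0 k ω)

omit [MeasurableSpace 𝓧] in
lemma S_eval (m n : ℕ) (hm : m ≤ n) (ω : ℕ → 𝓧)
    (hpre : ∀ j, 1 ≤ j → j < m → ω j ∉ C)
    (hpost : ∀ k, m < k → k < n + 1 → ¬ (∀ j, 1 ≤ j → j < k → ω j ∉ C)) :
    S C f (n+1) ω = T f m ω := by
  have hsub : Finset.Icc 1 m ⊆ Finset.range (n+1) := by
    intro k hk
    rw [Finset.mem_range]
    have := (Finset.mem_Icc.mp hk).2
    omega
  have hzero : ∀ k ∈ Finset.range (n+1), k ∉ Finset.Icc 1 m → term C f k ω = 0 := by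
    intro k hk hk'
    have hk2 := Finset.mem_range.mp hk
    rw [Finset.mem_Icc] at hk'
    apply Set.indicator_of_notMem
    intro hmem
    obtain ⟨hk1, hcond⟩ := hmem
    exact hpost k (by omega) (by omega) hcond
  unfold S T
  rw [← Finset.sum_subset hsub hzero]
  apply Finset.sum_congr rfl
  intro k hk
  obtain ⟨hk1, hk2⟩ := Finset.mem_Icc.mp hk
  apply Set.indicator_of_mem
  exact ⟨hk1, fun j hj1 hj2 => hpre j hj1 (by omega)⟩

lemma U_succ (n : ℕ) (ω : ℕ → 𝓧) :
    U C f V a (n+1) ω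
      = StopP C f V a n ω
        + Set.indicator (A C n)
            (fun ω' => ENNReal.ofReal (Real.exp (a * T f n ω' + V (ω' (n+1))))) ω := by
  unfold U StopP Cont
  rw [Finset.sum_Icc_succ_top (by omega : 1 ≤ n+1), add_assoc]
  congr 1
  simp only [Nat.add_sub_cancel]
  by_cases hA : ω ∈ A C n
  · by_cases hc : ω (n+1) ∈ C
    · have h1 : ω ∈ stopAt C (n+1) := ⟨fun j hj1 hj2 => hA j hj1 hj2, hc⟩
      have h2 : ω ∉ A C (n+1) := fun h => h (n+1) (by omega) (by omega) hc
      rw [Set.indicator_of_mem h1, Set.indicator_of_notMem h2,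
        Set.indicator_of_mem hA, add_zero]
    · have h1 : ω ∉ stopAt C (n+1) := fun h => hc h.2
      have h2 : ω ∈ A C (n+1) := by
        intro j hj1 hj2
        rcases Nat.lt_or_ge j (n+1) with h | h
        · exact hA j hj1 h
        · have : j = n+1 := by omega
          rw [this]; exact hc
      rw [Set.indicator_of_notMem h1, Set.indicator_of_mem h2,
        Set.indicator_of_mem hA, zero_add]
  · have h1 : ω ∉ stopAt C (n+1) := fun h => hA (fun j hj1 hj2 => h.1 j hj1 (by omega))
    have h2 : ω ∉ A C (n+1) := fun h => hA (fun j hj1 hj2 => h j hj1 (by omega))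
    rw [Set.indicator_of_notMem h1, Set.indicator_of_notMem h2,
      Set.indicator_of_notMem hA, add_zero]

lemma U_one (ω : ℕ → 𝓧) : U C f V a 1 ω = ENNReal.ofReal (Real.exp (V (ω 1))) := by
  rw [show (1:ℕ) = 0 + 1 from rfl, U_succ]
  have hA : ω ∈ A C 0 := by intro j hj1 hj2; omega
  have h0 : StopP C f V a 0 ω = 0 := by simp [StopP]
  rw [h0, zero_add, Set.indicator_of_mem hA, T_zero]
  norm_num

lemma meas_coord (n i : ℕ) (hi : i ≤ n) :
    Measurable[MeasurableSpace.comap (fun (ω : ℕ → 𝓧) (i : Fin (n+1)) => ω i) inferInstance]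
      (fun ω : ℕ → 𝓧 => ω i) := by
  have hπ : Measurable[MeasurableSpace.comap (fun (ω : ℕ → 𝓧) (i : Fin (n+1)) => ω i) inferInstance]
      (fun (ω : ℕ → 𝓧) (i : Fin (n+1)) => ω i) := measurable_iff_comap_le.mpr le_rfl
  exact (measurable_pi_apply (⟨i, by omega⟩ : Fin (n+1))).comp hπ

lemma meas_T (hf : Measurable f) (n m : ℕ) (hm : m ≤ n) :
    Measurable[MeasurableSpace.comap (fun (ω : ℕ → 𝓧) (i : Fin (n+1)) => ω i) inferInstance]
      (T f m) := by
  apply Finset.measurable_sum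
  intro k hk
  exact hf.comp (meas_coord n k (le_trans (Finset.mem_Icc.mp hk).2 hm))

lemma measSet_A (hC : MeasurableSet C) (n m : ℕ) (hm : m ≤ n) :
    MeasurableSet[MeasurableSpace.comap (fun (ω : ℕ → 𝓧) (i : Fin (n+1)) => ω i) inferInstance]
      (A C m) := by
  have : A C m = ⋂ (j : ℕ) (_ : 1 ≤ j) (_ : j < m + 1), (fun ω : ℕ → 𝓧 => ω j) ⁻¹' Cᶜ := by
    ext ω; simp [A, Set.mem_iInter]
  rw [this]
  exact MeasurableSet.iInter fun j => MeasurableSet.iInter fun h1 =>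
    MeasurableSet.iInter fun h2 => (meas_coord n j (by omega)) hC.compl

lemma measSet_stopAt (hC : MeasurableSet C) (n m : ℕ) (hm : m ≤ n) :
    MeasurableSet[MeasurableSpace.comap (fun (ω : ℕ → 𝓧) (i : Fin (n+1)) => ω i) inferInstance]
      (stopAt C m) := by
  have : stopAt C m = (⋂ (j : ℕ) (_ : 1 ≤ j) (_ : j < m), (fun ω : ℕ → 𝓧 => ω j) ⁻¹' Cᶜ)
      ∩ (fun ω : ℕ → 𝓧 => ω m) ⁻¹' C := by
    ext ω; simp [stopAt, Set.mem_iInter]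
  rw [this]
  exact (MeasurableSet.iInter fun j => MeasurableSet.iInter fun h1 =>
    MeasurableSet.iInter fun h2 => (meas_coord n j (by omega)) hC.compl).inter
    ((meas_coord n m hm) hC)

lemma meas_StopP (hC : MeasurableSet C) (hf : Measurable f) (hV : Measurable V) (n : ℕ) :
    Measurable[MeasurableSpace.comap (fun (ω : ℕ → 𝓧) (i : Fin (n+1)) => ω i) inferInstance]
      (StopP C f V a n) := by
  apply Finset.measurable_sum
  intro m hm
  have hm' : m ≤ n := (Finset.mem_Icc.mp hm).2
  exact Measurable.indicator
    (ENNReal.measurable_ofReal.comp (Real.measurable_exp.comp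
      (((meas_T hf n (m-1) (by omega)).const_mul a).add (hV.comp (meas_coord n m hm')))))
    (measSet_stopAt hC n m hm')

lemma meas_Cont (hC : MeasurableSet C) (hf : Measurable f) (hV : Measurable V) (n : ℕ) :
    Measurable[MeasurableSpace.comap (fun (ω : ℕ → 𝓧) (i : Fin (n+1)) => ω i) inferInstance]
      (Cont C f V a n) :=
  Measurable.indicator
    (ENNReal.measurable_ofReal.comp (Real.measurable_exp.comp
      (((meas_T hf n (n-1) (by omega)).const_mul a).add (hV.comp (meas_coord n n le_rfl)))))
    (measSet_A hC n n le_rfl)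

lemma hle (n : ℕ) :
    (MeasurableSpace.comap (fun (ω : ℕ → 𝓧) (i : Fin (n+1)) => ω i) inferInstance)
      ≤ (by infer_instance : MeasurableSpace (ℕ → 𝓧)) :=
  measurable_iff_comap_le.mp (measurable_pi_lambda _ fun i => measurable_pi_apply _)

lemma markov_mul (P : Kernel 𝓧 𝓧) [IsMarkovKernel P]
    (Pr : 𝓧 → Measure (ℕ → 𝓧))
    (hMarkov : ∀ (x : 𝓧) (n : ℕ) (g : 𝓧 → ENNReal), Measurable g →
      ∀ s : Set (ℕ → 𝓧),
        MeasurableSet[MeasurableSpace.comap (fun ω (i : Fin (n+1)) => ω i) inferInstance] s →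
        ∫⁻ ω in s, g (ω (n+1)) ∂(Pr x) = ∫⁻ ω in s, (∫⁻ y, g y ∂(P (ω n))) ∂(Pr x))
    (x : 𝓧) (n : ℕ) (g : 𝓧 → ℝ≥0∞) (hg : Measurable g)
    (H : (ℕ → 𝓧) → ℝ≥0∞)
    (hH : Measurable[MeasurableSpace.comap (fun (ω : ℕ → 𝓧) (i : Fin (n+1)) => ω i) inferInstance] H) :
    ∫⁻ ω, H ω * g (ω (n+1)) ∂(Pr x) = ∫⁻ ω, H ω * ∫⁻ y, g y ∂(P (ω n)) ∂(Pr x) := by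
  have hgc : Measurable fun ω : ℕ → 𝓧 => g (ω (n+1)) := hg.comp (measurable_pi_apply _)
  have hFc : Measurable fun ω : ℕ → 𝓧 => ∫⁻ y, g y ∂(P (ω n)) :=
    (Measurable.lintegral_kernel hg).comp (measurable_pi_apply _)
  refine @Measurable.ennreal_induction (ℕ → 𝓧)
    (MeasurableSpace.comap (fun (ω : ℕ → 𝓧) (i : Fin (n+1)) => ω i) inferInstance)
    (fun H => ∫⁻ ω, H ω * g (ω (n+1)) ∂(Pr x) = ∫⁻ ω, H ω * ∫⁻ y, g y ∂(P (ω n)) ∂(Pr x))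
    ?_ ?_ ?_ H hH
  · intro c s hs
    have hs' : MeasurableSet s := hle n s hs
    have key := hMarkov x n g hg s hs
    calc ∫⁻ ω, s.indicator (fun _ => c) ω * g (ω (n+1)) ∂(Pr x)
        = ∫⁻ ω, s.indicator (fun ω => c * g (ω (n+1))) ω ∂(Pr x) := by
          congr 1; funext ω; by_cases h : ω ∈ s <;> simp [Set.indicator, h]
      _ = c * ∫⁻ ω in s, g (ω (n+1)) ∂(Pr x) := by
          rw [lintegral_indicator hs' _, lintegral_const_mul _ hgc]
      _ = c * ∫⁻ ω in s, (∫⁻ y, g y ∂(P (ω n))) ∂(Pr x) := by rw [key]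
      _ = ∫⁻ ω, s.indicator (fun ω => c * ∫⁻ y, g y ∂(P (ω n))) ω ∂(Pr x) := by
          rw [lintegral_indicator hs' _, lintegral_const_mul _ hFc]
      _ = ∫⁻ ω, s.indicator (fun _ => c) ω * ∫⁻ y, g y ∂(P (ω n)) ∂(Pr x) := by
          congr 1; funext ω; by_cases h : ω ∈ s <;> simp [Set.indicator, h]
  · intro H₁ H₂ _ hm1 hm2 ih1 ih2
    have hm1' : Measurable H₁ := hm1.mono (hle n) le_rfl
    simp only [Pi.add_apply, add_mul]
    rw [lintegral_add_left (f := fun ω => H₁ ω * g (ω (n+1))) (hm1'.mul hgc),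
      lintegral_add_left (f := fun ω => H₁ ω * ∫⁻ y, g y ∂(P (ω n))) (hm1'.mul hFc), ih1, ih2]
  · intro Hs hms hmono ihs
    have hms' : ∀ i, Measurable (Hs i) := fun i => (hms i).mono (hle n) le_rfl
    calc ∫⁻ ω, (⨆ i, Hs i ω) * g (ω (n+1)) ∂(Pr x)
        = ∫⁻ ω, ⨆ i, Hs i ω * g (ω (n+1)) ∂(Pr x) := by
          congr 1; funext ω; rw [ENNReal.iSup_mul]
      _ = ⨆ i, ∫⁻ ω, Hs i ω * g (ω (n+1)) ∂(Pr x) :=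
          lintegral_iSup (fun i => (hms' i).mul hgc)
            (fun i j hij ω => mul_le_mul_left (hmono hij ω) _)
      _ = ⨆ i, ∫⁻ ω, Hs i ω * ∫⁻ y, g y ∂(P (ω n)) ∂(Pr x) := iSup_congr ihs
      _ = ∫⁻ ω, ⨆ i, Hs i ω * ∫⁻ y, g y ∂(P (ω n)) ∂(Pr x) :=
          (lintegral_iSup (fun i => (hms' i).mul hFc)
            (fun i j hij ω => mul_le_mul_left (hmono hij ω) _)).symm
      _ = ∫⁻ ω, (⨆ i, Hs i ω) * ∫⁻ y, g y ∂(P (ω n)) ∂(Pr x) := by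
          congr 1; funext ω; rw [ENNReal.iSup_mul]

end MDriftAux

open MDriftAux

/-- Under the multiplicative drift condition `log[(P exp V)(x)] ≤ V(x) - (1-γ) f(x) + K`,
with `C = {f ≤ R}`, `R > K/(1-γ)`, `γ_R = γ + K/R`: for every `x ∈ C`,
`E[exp((1-γ_R) Σ_{k=1}^{τ_C} f(X_k)) | X_0 = x] ≤ exp(V(x) - (1-γ) f(x) + 2K)`. -/
theorem multiplicative_drift_exponential_moment_bound
    {𝓧 : Type*} [MeasurableSpace 𝓧]
    (P : Kernel 𝓧 𝓧) [IsMarkovKernel P]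
    (Pr : 𝓧 → Measure (ℕ → 𝓧)) (hprob : ∀ x, IsProbabilityMeasure (Pr x))
    (hstart : ∀ x, (Pr x) {ω | ω 0 = x} = 1)
    (hMarkov : ∀ (x : 𝓧) (n : ℕ) (g : 𝓧 → ENNReal), Measurable g →
      ∀ s : Set (ℕ → 𝓧),
        MeasurableSet[MeasurableSpace.comap (fun ω (i : Fin (n+1)) => ω i) inferInstance] s →
        ∫⁻ ω in s, g (ω (n+1)) ∂(Pr x) = ∫⁻ ω in s, (∫⁻ y, g y ∂(P (ω n))) ∂(Pr x))
    (V f : 𝓧 → ℝ) (hV : Measurable V) (hf : Measurable f)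
    (hV0 : ∀ x, 0 ≤ V x) (hf0 : ∀ x, 0 ≤ f x)
    (γ K R : ℝ) (hγ : γ ∈ Set.Ioo (0:ℝ) 1) (hK : 0 ≤ K) (hR : K / (1 - γ) < R)
    (hexpint : ∀ x, Integrable (fun y => Real.exp (V y)) (P x))
    (hdrift : ∀ x, Real.log (∫ y, Real.exp (V y) ∂(P x)) ≤ V x - (1 - γ) * f x + K)
    (C : Set 𝓧) (hC : C = {x | f x ≤ R})
    (x : 𝓧) (hx : x ∈ C) :
    ∫⁻ ω, ENNReal.ofReal (Real.exp ((1 - (γ + K / R)) * ∑' k : ℕ,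
        Set.indicator {ω' : ℕ → 𝓧 | 1 ≤ k ∧ ∀ j, 1 ≤ j → j < k → ω' j ∉ C}
          (fun ω' => f (ω' k)) ω)) ∂(Pr x)
      ≤ ENNReal.ofReal (Real.exp (V x - (1 - γ) * f x + 2 * K)) := by
  classical
  obtain ⟨hγ0, hγ1⟩ := hγ
  set a : ℝ := 1 - (γ + K / R) with ha_def
  clear_value a
  -- basic real facts
  have hR0 : 0 < R := lt_of_le_of_lt (div_nonneg hK (by linarith)) hR
  have hKR : K / R < 1 - γ := (div_lt_iff₀ hR0).mpr (by
    have := (div_lt_iff₀ (by linarith : (0:ℝ) < 1 - γ)).mp hR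
    nlinarith)
  have ha0 : 0 < a := by simp only [ha_def]; linarith
  have ha1γ : a ≤ 1 - γ := by
    have : 0 ≤ K / R := div_nonneg hK hR0.le
    simp only [ha_def]; linarith
  have hCmeas : MeasurableSet C := by
    rw [hC]; exact measurableSet_le hf measurable_const
  -- integral of exp V is ≥ 1 and bounded by drift
  have one_le_int : ∀ z, 1 ≤ ∫ y, Real.exp (V y) ∂(P z) := by
    intro z
    have h1 : ∫ (_ : 𝓧), (1:ℝ) ∂(P z) = 1 := by simp
    rw [← h1]
    exact integral_mono (integrable_const 1) (hexpint z) (fun y => Real.one_le_exp (hV0 y))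
  have int_le : ∀ z, (∫ y, Real.exp (V y) ∂(P z)) ≤ Real.exp (V z - (1 - γ) * f z + K) := by
    intro z
    have hpos : (0:ℝ) < ∫ y, Real.exp (V y) ∂(P z) := lt_of_lt_of_le one_pos (one_le_int z)
    calc ∫ y, Real.exp (V y) ∂(P z) = Real.exp (Real.log (∫ y, Real.exp (V y) ∂(P z))) :=
          (Real.exp_log hpos).symm
      _ ≤ _ := Real.exp_le_exp.mpr (hdrift z)
  have log_nn : ∀ z, 0 ≤ Real.log (∫ y, Real.exp (V y) ∂(P z)) :=
    fun z => Real.log_nonneg (one_le_int z)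
  have L1 : ∀ z, a * f z ≤ V z + K := by
    intro z
    have h := hdrift z
    have h0 := log_nn z
    have h1 : a * f z ≤ (1 - γ) * f z := mul_le_mul_of_nonneg_right ha1γ (hf0 z)
    linarith
  have L2 : ∀ z, z ∉ C → (∫ y, Real.exp (V y) ∂(P z)) ≤ Real.exp (V z - a * f z) := by
    intro z hz
    refine (int_le z).trans (Real.exp_le_exp.mpr ?_)
    have hfz : R < f z := by
      rw [hC] at hz; exact lt_of_not_ge hz
    have h1 : K ≤ (K / R) * f z := by
      rw [div_mul_eq_mul_div, le_div_iff₀ hR0]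
      exact mul_le_mul_of_nonneg_left hfz.le hK
    have h2 : (1 - γ) - a = K / R := by simp only [ha_def]; ring
    have h3 : ((1 - γ) - a) * f z = (K / R) * f z := by rw [h2]
    nlinarith [h1, h3]
  -- the one-step transition function
  set g : 𝓧 → ℝ≥0∞ := fun y => ENNReal.ofReal (Real.exp (V y)) with hg_def
  have hg : Measurable g := ENNReal.measurable_ofReal.comp (Real.measurable_exp.comp hV)
  set F : 𝓧 → ℝ≥0∞ := fun y => ∫⁻ y', g y' ∂(P y) with hF_def
  have hFg : ∀ y, F y = ENNReal.ofReal (∫ y', Real.exp (V y') ∂(P y)) := fun y =>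
    (ofReal_integral_eq_lintegral_ofReal (hexpint y)
      (Filter.Eventually.of_forall fun y' => (Real.exp_pos _).le)).symm
  haveI := hprob x
  -- base case : expected value of U 1
  have base : ∫⁻ ω, U C f V a 1 ω ∂(Pr x)
      ≤ ENNReal.ofReal (Real.exp (V x - (1 - γ) * f x + K)) := by
    have h1 : ∫⁻ ω, U C f V a 1 ω ∂(Pr x) = ∫⁻ ω, g (ω (0+1)) ∂(Pr x) :=
      lintegral_congr fun ω => U_one ω
    have h2 : ∫⁻ ω, g (ω (0+1)) ∂(Pr x) = ∫⁻ ω, F (ω 0) ∂(Pr x) := by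
      have := hMarkov x 0 g hg Set.univ MeasurableSet.univ
      simpa [Measure.restrict_univ] using this
    have hFmeas : Measurable F := Measurable.lintegral_kernel hg
    set B : Set (ℕ → 𝓧) := (fun ω : ℕ → 𝓧 => F (ω 0)) ⁻¹' {F x} with hB_def
    have hBmeas : MeasurableSet B :=
      (hFmeas.comp (measurable_pi_apply 0)) (measurableSet_singleton _)
    have hB1 : Pr x B = 1 := by
      refine le_antisymm prob_le_one ?_
      rw [← hstart x]
      refine measure_mono (fun ω hω => ?_)
      have : ω 0 = x := hω
      simp [hB_def, Set.mem_preimage, this]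
    have hBc : Pr x Bᶜ = 0 := by
      rw [measure_compl hBmeas (measure_ne_top _ _), measure_univ, hB1, tsub_self]
    have hae : ∀ᵐ ω ∂(Pr x), F (ω 0) = F x := by
      have hBeq : {ω : ℕ → 𝓧 | F (ω 0) = F x} = B := rfl
      rw [Filter.eventually_iff, mem_ae_iff, hBeq]
      exact hBc
    have h3 : ∫⁻ ω, F (ω 0) ∂(Pr x) = F x := by
      rw [lintegral_congr_ae hae, lintegral_const, measure_univ, mul_one]
    rw [h1, h2, h3, hFg x]
    exact ENNReal.ofReal_le_ofReal (int_le x)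
  -- measurability of U (ambient)
  have hUmeas : ∀ n, Measurable (U C f V a n) := fun n =>
    ((meas_StopP hCmeas hf hV n).mono (hle n) le_rfl).add
      ((meas_Cont hCmeas hf hV n).mono (hle n) le_rfl)
  -- supermartingale step
  have step : ∀ n, 1 ≤ n →
      ∫⁻ ω, U C f V a (n+1) ω ∂(Pr x) ≤ ∫⁻ ω, U C f V a n ω ∂(Pr x) := by
    intro n hn
    set H : (ℕ → 𝓧) → ℝ≥0∞ :=
      Set.indicator (A C n) (fun ω' => ENNReal.ofReal (Real.exp (a * T f n ω'))) with hH_def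
    have hHmeas : Measurable[MeasurableSpace.comap
        (fun (ω : ℕ → 𝓧) (i : Fin (n+1)) => ω i) inferInstance] H :=
      Measurable.indicator
        (ENNReal.measurable_ofReal.comp (Real.measurable_exp.comp
          ((meas_T hf n n le_rfl).const_mul a)))
        (measSet_A hCmeas n n le_rfl)
    have hrw : ∀ ω, U C f V a (n+1) ω = StopP C f V a n ω + H ω * g (ω (n+1)) := by
      intro ω
      rw [U_succ]
      congr 1
      by_cases hA : ω ∈ A C n
      · rw [Set.indicator_of_mem hA, hH_def, Set.indicator_of_mem hA, hg_def,
          ← ENNReal.ofReal_mul (Real.exp_nonneg _), ← Real.exp_add]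
      · rw [Set.indicator_of_notMem hA, hH_def, Set.indicator_of_notMem hA, zero_mul]
    have hSmeas : Measurable (StopP C f V a n) := (meas_StopP hCmeas hf hV n).mono (hle n) le_rfl
    have hHmeas' : Measurable H := hHmeas.mono (hle n) le_rfl
    have pointwise : ∀ ω, H ω * F (ω n) ≤ Cont C f V a n ω := by
      intro ω
      by_cases hA : ω ∈ A C n
      · have hnC : ω n ∉ C := hA n hn (by omega)
        have hT : T f n ω = T f (n-1) ω + f (ω n) := by
          have h := T_succ (f := f) (n-1) ω
          rwa [show n - 1 + 1 = n by omega] at h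
        rw [hH_def, Set.indicator_of_mem hA]
        unfold MDriftAux.Cont
        rw [Set.indicator_of_mem hA, hFg (ω n)]
        calc ENNReal.ofReal (Real.exp (a * T f n ω))
              * ENNReal.ofReal (∫ y', Real.exp (V y') ∂(P (ω n)))
            ≤ ENNReal.ofReal (Real.exp (a * T f n ω))
              * ENNReal.ofReal (Real.exp (V (ω n) - a * f (ω n))) :=
              mul_le_mul_right (ENNReal.ofReal_le_ofReal (L2 _ hnC)) _
          _ = ENNReal.ofReal (Real.exp (a * T f n ω + (V (ω n) - a * f (ω n)))) := by
              rw [← ENNReal.ofReal_mul (Real.exp_nonneg _), ← Real.exp_add]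
          _ = ENNReal.ofReal (Real.exp (a * T f (n-1) ω + V (ω n))) := by
              congr 2
              rw [hT]; ring
      · rw [hH_def, Set.indicator_of_notMem hA, zero_mul]
        exact zero_le
    calc ∫⁻ ω, U C f V a (n+1) ω ∂(Pr x)
        = ∫⁻ ω, StopP C f V a n ω + H ω * g (ω (n+1)) ∂(Pr x) := lintegral_congr hrw
      _ = (∫⁻ ω, StopP C f V a n ω ∂(Pr x)) + ∫⁻ ω, H ω * g (ω (n+1)) ∂(Pr x) :=
          lintegral_add_left hSmeas _
      _ = (∫⁻ ω, StopP C f V a n ω ∂(Pr x)) + ∫⁻ ω, H ω * F (ω n) ∂(Pr x) := by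
          rw [markov_mul P Pr hMarkov x n g hg H hHmeas]
      _ ≤ (∫⁻ ω, StopP C f V a n ω ∂(Pr x)) + ∫⁻ ω, Cont C f V a n ω ∂(Pr x) :=
          add_le_add_right (lintegral_mono pointwise) _
      _ = ∫⁻ ω, U C f V a n ω ∂(Pr x) := (lintegral_add_left hSmeas _).symm
  -- pointwise comparison of exp(a * S) with exp(K) * U
  have hSU : ∀ n ω, ENNReal.ofReal (Real.exp (a * S C f (n+1) ω))
      ≤ ENNReal.ofReal (Real.exp K) * U C f V a (n+1) ω := by
    intro n ω
    have hcomb : ∀ c : ℝ, a * S C f (n+1) ω ≤ K + c →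
        ENNReal.ofReal (Real.exp c) ≤ U C f V a (n+1) ω →
        ENNReal.ofReal (Real.exp (a * S C f (n+1) ω))
          ≤ ENNReal.ofReal (Real.exp K) * U C f V a (n+1) ω := by
      intro c hc hU
      calc ENNReal.ofReal (Real.exp (a * S C f (n+1) ω))
          ≤ ENNReal.ofReal (Real.exp (K + c)) :=
            ENNReal.ofReal_le_ofReal (Real.exp_le_exp.mpr hc)
        _ = ENNReal.ofReal (Real.exp K) * ENNReal.ofReal (Real.exp c) := by
            rw [Real.exp_add, ENNReal.ofReal_mul (Real.exp_nonneg _)]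
        _ ≤ ENNReal.ofReal (Real.exp K) * U C f V a (n+1) ω := mul_le_mul_right hU _
    by_cases hstop : ∃ m, 1 ≤ m ∧ m ≤ n ∧ ω m ∈ C
    · set m₀ := Nat.find hstop with hm₀_def
      obtain ⟨hm1, hm2, hm3⟩ := Nat.find_spec hstop
      have hpre : ∀ j, 1 ≤ j → j < m₀ → ω j ∉ C := by
        intro j hj1 hj2 hjC
        exact Nat.find_min hstop hj2 ⟨hj1, by omega, hjC⟩
      have hst : ω ∈ stopAt C m₀ := ⟨hpre, hm3⟩
      have hS : S C f (n+1) ω = T f m₀ ω := by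
        refine S_eval m₀ n hm2 ω hpre ?_
        intro k hk1 hk2 hcond
        exact hcond m₀ hm1 hk1 hm3
      have hT : T f m₀ ω = T f (m₀-1) ω + f (ω m₀) := by
        have h := T_succ (f := f) (m₀-1) ω
        rwa [show m₀ - 1 + 1 = m₀ by omega] at h
      refine hcomb (a * T f (m₀-1) ω + V (ω m₀)) ?_ ?_
      · rw [hS, hT]
        have := L1 (ω m₀)
        nlinarith [hf0 (ω m₀), ha0.le]
      · unfold MDriftAux.U
        refine le_trans ?_ le_self_add
        unfold MDriftAux.StopP
        have hmem : m₀ ∈ Finset.Icc 1 (n+1) := Finset.mem_Icc.mpr ⟨hm1, by omega⟩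
        refine le_trans ?_ (Finset.single_le_sum (f := fun m => Set.indicator (stopAt C m)
          (fun ω' => ENNReal.ofReal (Real.exp (a * T f (m-1) ω' + V (ω' m)))) ω)
          (fun i _ => zero_le) hmem)
        beta_reduce
        rw [Set.indicator_of_mem hst]
    · have hA : ω ∈ A C n := by
        intro j hj1 hj2 hjC
        exact hstop ⟨j, hj1, by omega, hjC⟩
      have hS : S C f (n+1) ω = T f n ω := by
        refine S_eval n n le_rfl ω (fun j hj1 hj2 => hA j hj1 (by omega)) ?_
        intro k hk1 hk2
        omega
      refine hcomb (a * T f n ω + V (ω (n+1))) ?_ ?_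
      · rw [hS]
        have := hV0 (ω (n+1))
        linarith
      · by_cases hc : ω (n+1) ∈ C
        · have hst : ω ∈ stopAt C (n+1) := ⟨fun j hj1 hj2 => hA j hj1 hj2, hc⟩
          unfold MDriftAux.U
          refine le_trans ?_ le_self_add
          unfold MDriftAux.StopP
          have hmem : (n+1) ∈ Finset.Icc 1 (n+1) := Finset.mem_Icc.mpr ⟨by omega, le_rfl⟩
          refine le_trans ?_ (Finset.single_le_sum (f := fun m => Set.indicator (stopAt C m)
            (fun ω' => ENNReal.ofReal (Real.exp (a * T f (m-1) ω' + V (ω' m)))) ω)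
            (fun i _ => zero_le) hmem)
          beta_reduce
          rw [Set.indicator_of_mem hst, show n + 1 - 1 = n from rfl]
        · have hA' : ω ∈ A C (n+1) := by
            intro j hj1 hj2
            rcases Nat.lt_or_ge j (n+1) with h | h
            · exact hA j hj1 h
            · have : j = n+1 := by omega
              rw [this]; exact hc
          unfold MDriftAux.U
          refine le_trans ?_ le_add_self
          unfold MDriftAux.Cont
          rw [Set.indicator_of_mem hA']
          simp only [Nat.add_sub_cancel]
          exact le_rfl
  -- per-n bound
  have RHS_exp_nn : 0 ≤ V x - (1 - γ) * f x + 2 * K := by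
    have h := hdrift x
    have h0 := log_nn x
    linarith
  have per_n : ∀ n, ∫⁻ ω, ENNReal.ofReal (Real.exp (a * S C f n ω)) ∂(Pr x)
      ≤ ENNReal.ofReal (Real.exp (V x - (1 - γ) * f x + 2 * K)) := by
    intro n
    cases n with
    | zero =>
      have : ∀ ω : ℕ → 𝓧, ENNReal.ofReal (Real.exp (a * S C f 0 ω)) = 1 := by
        intro ω; simp [S]
      rw [lintegral_congr this, lintegral_one, measure_univ]
      rw [ENNReal.one_le_ofReal]
      exact Real.one_le_exp RHS_exp_nn
    | succ n =>
      have hUle : ∫⁻ ω, U C f V a (n+1) ω ∂(Pr x) ≤ ∫⁻ ω, U C f V a 1 ω ∂(Pr x) := by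
        have : ∀ m, 1 ≤ m → ∫⁻ ω, U C f V a m ω ∂(Pr x) ≤ ∫⁻ ω, U C f V a 1 ω ∂(Pr x) := by
          intro m hm
          induction m, hm using Nat.le_induction with
          | base => exact le_rfl
          | succ m hm ih => exact (step m hm).trans ih
        exact this (n+1) (by omega)
      calc ∫⁻ ω, ENNReal.ofReal (Real.exp (a * S C f (n+1) ω)) ∂(Pr x)
          ≤ ∫⁻ ω, ENNReal.ofReal (Real.exp K) * U C f V a (n+1) ω ∂(Pr x) :=
            lintegral_mono (hSU n)
        _ = ENNReal.ofReal (Real.exp K) * ∫⁻ ω, U C f V a (n+1) ω ∂(Pr x) :=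
            lintegral_const_mul _ (hUmeas (n+1))
        _ ≤ ENNReal.ofReal (Real.exp K) * ∫⁻ ω, U C f V a 1 ω ∂(Pr x) :=
            mul_le_mul_right hUle _
        _ ≤ ENNReal.ofReal (Real.exp K)
              * ENNReal.ofReal (Real.exp (V x - (1 - γ) * f x + K)) :=
            mul_le_mul_right base _
        _ = ENNReal.ofReal (Real.exp (V x - (1 - γ) * f x + 2 * K)) := by
            rw [← ENNReal.ofReal_mul (Real.exp_nonneg _), ← Real.exp_add]
            congr 1
            ring
  -- measurability of exp(a * S n)
  have hmeasS : ∀ n, Measurable fun ω : ℕ → 𝓧 => ENNReal.ofReal (Real.exp (a * S C f n ω)) := by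
    intro n
    apply ENNReal.measurable_ofReal.comp
    apply Real.measurable_exp.comp
    apply Measurable.const_mul
    apply Finset.measurable_sum
    intro k _
    unfold MDriftAux.term
    apply Measurable.indicator (hf.comp (measurable_pi_apply k))
    by_cases hk1 : 1 ≤ k
    · have : {ω' : ℕ → 𝓧 | 1 ≤ k ∧ ∀ j, 1 ≤ j → j < k → ω' j ∉ C}
          = ⋂ (j : ℕ) (_ : 1 ≤ j) (_ : j < k), (fun ω' : ℕ → 𝓧 => ω' j) ⁻¹' Cᶜ := by
        ext ω'; simp [Set.mem_iInter, hk1]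
      rw [this]
      exact MeasurableSet.iInter fun j => MeasurableSet.iInter fun h1 =>
        MeasurableSet.iInter fun h2 => (measurable_pi_apply j) hCmeas.compl
    · have : {ω' : ℕ → 𝓧 | 1 ≤ k ∧ ∀ j, 1 ≤ j → j < k → ω' j ∉ C} = ∅ := by
        ext ω'; simp [hk1]
      rw [this]; exact MeasurableSet.empty
  -- pointwise limit bound
  have hpt : ∀ ω : ℕ → 𝓧, ENNReal.ofReal (Real.exp (a * ∑' k : ℕ, term C f k ω))
      ≤ ⨆ n, ENNReal.ofReal (Real.exp (a * S C f n ω)) := by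
    intro ω
    by_cases hsum : Summable (fun k => term C f k ω)
    · have ht := hsum.hasSum.tendsto_sum_nat
      have ht2 : Filter.Tendsto (fun n => ENNReal.ofReal (Real.exp (a * S C f n ω)))
          Filter.atTop (𝓝 (ENNReal.ofReal (Real.exp (a * ∑' k : ℕ, term C f k ω)))) :=
        (ENNReal.continuous_ofReal.tendsto _).comp
          ((Real.continuous_exp.tendsto _).comp (ht.const_mul a))
      exact le_of_tendsto' ht2
        (fun n => le_iSup (fun n => ENNReal.ofReal (Real.exp (a * S C f n ω))) n)
    · rw [tsum_eq_zero_of_not_summable hsum]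
      refine le_iSup_of_le 0 ?_
      simp [S]
  -- final assembly
  calc ∫⁻ ω, ENNReal.ofReal (Real.exp (a * ∑' k : ℕ, term C f k ω)) ∂(Pr x)
      ≤ ∫⁻ ω, ⨆ n, ENNReal.ofReal (Real.exp (a * S C f n ω)) ∂(Pr x) := lintegral_mono hpt
    _ = ⨆ n, ∫⁻ ω, ENNReal.ofReal (Real.exp (a * S C f n ω)) ∂(Pr x) :=
        lintegral_iSup hmeasS (fun i j hij ω => ENNReal.ofReal_le_ofReal
          (Real.exp_le_exp.mpr (mul_le_mul_of_nonneg_left (S_mono hf0 ω hij) ha0.le)))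
    _ ≤ ENNReal.ofReal (Real.exp (V x - (1 - γ) * f x + 2 * K)) := iSup_le per_n
end

section
/- Let Y_1,...,Y_N be i.i.d. from Q, w : X → [0,∞) with ∫ w dQ = 1 and ∫ w² dQ < ∞, and g : X → ℝ bounded with sup|g| ≤ G. Then the mean squared error of the self-normalized importance sampling estimate satisfies E|Σ_i (w(Y_i)/Σ_j w(Y_j)) g(Y_i) - ∫ g w dQ|² ≤ (4G²/N) ∫ w² dQ - 2G²/N. -/
open MeasureTheory ProbabilityTheory

private lemma snis_aux
    {Ω 𝓧 : Type*} [MeasurableSpace Ω] [MeasurableSpace 𝓧]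
    (μ : Measure Ω) [IsProbabilityMeasure μ]
    (Q : Measure 𝓧) [IsProbabilityMeasure Q]
    (N : ℕ) (hN : 0 < N)
    (Y : Fin N → Ω → 𝓧) (hY : ∀ i, Measurable (Y i))
    (hiid : iIndepFun Y μ)
    (hdist : ∀ i, μ.map (Y i) = Q)
    (φ : 𝓧 → ℝ) (hφ : Measurable φ) (hφ2 : Integrable (fun z => (φ z) ^ 2) Q) :
    MemLp (fun ω => ∑ i, φ (Y i ω)) 2 μ ∧
    ∫ ω, ((∑ i, φ (Y i ω)) / N - ∫ z, φ z ∂Q) ^ 2 ∂μ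
      = ((∫ z, (φ z) ^ 2 ∂Q) - (∫ z, φ z ∂Q) ^ 2) / N := by
  have hn : ((N : ℝ)) ≠ 0 := Nat.cast_ne_zero.mpr hN.ne'
  set m := ∫ z, φ z ∂Q with hm
  set κ := ∫ z, (φ z) ^ 2 ∂Q with hκ
  have hmapφ : ∀ i, ∫ ω, φ (Y i ω) ∂μ = m := by
    intro i
    rw [hm, ← hdist i, integral_map (hY i).aemeasurable hφ.aestronglyMeasurable]
  have hmapφ2 : ∀ i, ∫ ω, (φ (Y i ω)) ^ 2 ∂μ = κ := by
    intro i
    rw [hκ, ← hdist i, integral_map (hY i).aemeasurable (hφ.pow_const 2).aestronglyMeasurable]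
  have hint2 : ∀ i, Integrable (fun ω => (φ (Y i ω)) ^ 2) μ := by
    intro i
    have h : Integrable (fun z => (φ z) ^ 2) (μ.map (Y i)) := by rw [hdist i]; exact hφ2
    exact (integrable_map_measure (hφ.pow_const 2).aestronglyMeasurable
      (hY i).aemeasurable).mp h
  have hmem : ∀ i, MemLp (fun ω => φ (Y i ω)) 2 μ := fun i =>
    (memLp_two_iff_integrable_sq ((hφ.comp (hY i)).aestronglyMeasurable)).mpr (hint2 i)
  have hvari : ∀ i, variance (fun ω => φ (Y i ω)) μ = κ - m ^ 2 := by
    intro i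
    rw [variance_eq_sub (hmem i)]
    simp only [Pi.pow_apply]
    rw [hmapφ2 i, hmapφ i]
  have hfeq : (∑ i : Fin N, fun ω => φ (Y i ω)) = fun ω => ∑ i, φ (Y i ω) := by
    funext ω; simp [Finset.sum_apply]
  have hsum_mem : MemLp (fun ω => ∑ i, φ (Y i ω)) 2 μ := by
    rw [← hfeq]; exact memLp_finset_sum' _ (fun i _ => hmem i)
  refine ⟨hsum_mem, ?_⟩
  have hvarsum : variance (fun ω => ∑ i, φ (Y i ω)) μ = N * (κ - m ^ 2) := by
    rw [← hfeq, IndepFun.variance_sum (fun i _ => hmem i)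
      (fun i _ j _ hij => (hiid.indepFun hij).comp hφ hφ)]
    simp [hvari, Finset.card_univ]
    ring
  have hintsum : Integrable (fun ω => ∑ i, φ (Y i ω)) μ :=
    integrable_finset_sum _ (fun i _ => (hmem i).integrable one_le_two)
  have hintsumsq : Integrable (fun ω => (∑ i, φ (Y i ω)) ^ 2) μ := hsum_mem.integrable_sq
  have hEsum : ∫ ω, (∑ i, φ (Y i ω)) ∂μ = N * m := by
    rw [integral_finset_sum _ (fun i _ => (hmem i).integrable one_le_two)]
    simp [hmapφ, Finset.card_univ]
  have hEsumsq : ∫ ω, (∑ i, φ (Y i ω)) ^ 2 ∂μ = N * (κ - m ^ 2) + (N * m) ^ 2 := by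
    have h := variance_eq_sub hsum_mem
    simp only [Pi.pow_apply] at h
    rw [hEsum] at h
    rw [hvarsum] at h
    linarith
  have expand : (fun ω => ((∑ i, φ (Y i ω)) / N - m) ^ 2)
      = fun ω => (1 / (N : ℝ) ^ 2) * (∑ i, φ (Y i ω)) ^ 2
        - (2 * m / N) * (∑ i, φ (Y i ω)) + m ^ 2 := by
    funext ω; field_simp; ring
  rw [expand, integral_add, integral_sub, integral_const_mul, integral_const_mul,
    integral_const, hEsum, hEsumsq]
  · simp only [probReal_univ, measure_univ, ENNReal.toReal_one, smul_eq_mul, one_mul]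
    field_simp
    ring
  · exact hintsumsq.const_mul _
  · exact hintsum.const_mul _
  · exact (hintsumsq.const_mul _).sub (hintsum.const_mul _)
  · exact integrable_const _
/-- Mean squared error bound for self-normalized importance sampling with bounded
integrand: `E|Σ_i (w(Y_i)/Σ_j w(Y_j)) g(Y_i) - ∫ g w dQ|² ≤ (4G²/N)∫ w² dQ - 2G²/N`. -/
theorem self_normalized_is_mse_bound
    {Ω 𝓧 : Type*} [MeasurableSpace Ω] [MeasurableSpace 𝓧]
    (μ : Measure Ω) [IsProbabilityMeasure μ]
    (Q : Measure 𝓧) [IsProbabilityMeasure Q]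
    (N : ℕ) (hN : 0 < N)
    (Y : Fin N → Ω → 𝓧) (hY : ∀ i, Measurable (Y i))
    (hiid : iIndepFun Y μ)
    (hdist : ∀ i, μ.map (Y i) = Q)
    (w : 𝓧 → ℝ) (hw : Measurable w) (hw0 : ∀ z, 0 ≤ w z)
    (hwmean : ∫ z, w z ∂Q = 1)
    (hw2 : Integrable (fun z => (w z) ^ 2) Q)
    (g : 𝓧 → ℝ) (hg : Measurable g) (G : ℝ) (hG : ∀ z, |g z| ≤ G) :
    ∫ ω, ((∑ i, (w (Y i ω) / ∑ j, w (Y j ω)) * g (Y i ω)) - ∫ z, g z * w z ∂Q) ^ 2 ∂μ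
      ≤ (4 * G ^ 2 / N) * (∫ z, (w z) ^ 2 ∂Q) - 2 * G ^ 2 / N := by
  have hn : (0:ℝ) < (N : ℝ) := Nat.cast_pos.mpr hN
  -- 𝓧 is nonempty, hence G ≥ 0
  have hne : Nonempty 𝓧 := by
    by_contra hc
    rw [not_nonempty_iff] at hc
    have h1 : Q Set.univ = 1 := measure_univ
    rw [Set.univ_eq_empty_iff.mpr hc, measure_empty] at h1
    exact zero_ne_one h1
  have hG0 : (0:ℝ) ≤ G := le_trans (abs_nonneg _) (hG hne.some)
  set I := ∫ z, g z * w z ∂Q with hI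
  set ρ := ∫ z, (w z) ^ 2 ∂Q with hρ
  set S : Ω → ℝ := fun ω => ∑ j, w (Y j ω) with hS
  set T : Ω → ℝ := fun ω => ∑ i, (w (Y i ω) / S ω) * g (Y i ω) with hT
  set P : Ω → ℝ := fun ω => ∑ i, (g (Y i ω) * w (Y i ω)) with hP
  set U : Ω → ℝ := fun ω => P ω / N - I with hU
  set V : Ω → ℝ := fun ω => T ω * (1 - S ω / N) with hV
  -- the two applications of the auxiliary lemma
  have hgw : Measurable (fun z => g z * w z) := hg.mul hw
  have hgw2 : Integrable (fun z => (g z * w z) ^ 2) Q := by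
    refine (hw2.const_mul (G ^ 2)).mono' ((hgw.pow_const 2).aestronglyMeasurable)
      (Filter.Eventually.of_forall fun z => ?_)
    have h1 : (g z) ^ 2 ≤ G ^ 2 := sq_le_sq' (abs_le.mp (hG z)).1 (abs_le.mp (hG z)).2
    have h2 : (g z * w z) ^ 2 ≤ G ^ 2 * (w z) ^ 2 := by
      rw [mul_pow]; exact mul_le_mul_of_nonneg_right h1 (sq_nonneg _)
    rw [Real.norm_eq_abs, abs_of_nonneg (sq_nonneg _)]
    exact h2
  have hκρ : ∫ z, (g z * w z) ^ 2 ∂Q ≤ G ^ 2 * ρ := by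
    rw [hρ, ← integral_const_mul]
    refine integral_mono hgw2 (hw2.const_mul _) (fun z => ?_)
    have h1 : (g z) ^ 2 ≤ G ^ 2 := sq_le_sq' (abs_le.mp (hG z)).1 (abs_le.mp (hG z)).2
    rw [mul_pow]; exact mul_le_mul_of_nonneg_right h1 (sq_nonneg _)
  obtain ⟨hPmem, hUint⟩ := snis_aux μ Q N hN Y hY hiid hdist (fun z => g z * w z) hgw hgw2
  obtain ⟨hSmem, hBint⟩ := snis_aux μ Q N hN Y hY hiid hdist w hw hw2
  rw [hwmean, one_pow] at hBint
  -- measurability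
  have hSm : Measurable S := Finset.measurable_sum _ (fun i _ => hw.comp (hY i))
  have hTm : Measurable T :=
    Finset.measurable_sum _ (fun i _ => ((hw.comp (hY i)).div hSm).mul (hg.comp (hY i)))
  have hVm : Measurable V := hTm.mul (measurable_const.sub (hSm.div_const _))
  -- |T ω| ≤ G
  have hTb : ∀ ω, |T ω| ≤ G := by
    intro ω
    have hSnn : 0 ≤ S ω := Finset.sum_nonneg (fun j _ => hw0 _)
    calc |T ω| ≤ ∑ i, |(w (Y i ω) / S ω) * g (Y i ω)| := Finset.abs_sum_le_sum_abs _ _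
      _ ≤ ∑ i : Fin N, (w (Y i ω) / S ω) * G := by
          refine Finset.sum_le_sum (fun i _ => ?_)
          rw [abs_mul, abs_of_nonneg (div_nonneg (hw0 _) hSnn)]
          exact mul_le_mul_of_nonneg_left (hG _) (div_nonneg (hw0 _) hSnn)
      _ = (S ω / S ω) * G := by rw [← Finset.sum_mul, ← Finset.sum_div]
      _ ≤ 1 * G := mul_le_mul_of_nonneg_right (div_self_le_one _) hG0
      _ = G := one_mul G
  have hSdef : ∀ ω, S ω = ∑ j, w (Y j ω) := fun _ => rfl
  have hTdef : ∀ ω, T ω = ∑ i, (w (Y i ω) / S ω) * g (Y i ω) := fun _ => rfl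
  have hPdef : ∀ ω, P ω = ∑ i, (g (Y i ω) * w (Y i ω)) := fun _ => rfl
  have hUdef : ∀ ω, U ω = P ω / N - I := fun _ => rfl
  have hVdef : ∀ ω, V ω = T ω * (1 - S ω / N) := fun _ => rfl
  have hn' : ((N:ℝ)) ≠ 0 := hn.ne'
  -- pointwise identity T - I = U + V
  have hid : ∀ ω, T ω - I = U ω + V ω := by
    intro ω
    have hTp : T ω = P ω / S ω := by
      rw [hTdef ω, hPdef ω, Finset.sum_div]
      refine Finset.sum_congr rfl (fun i _ => ?_)
      rw [div_mul_eq_mul_div, mul_comm (w (Y i ω))]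
    rw [hUdef ω, hVdef ω, hTp]
    by_cases hs : S ω = 0
    · have hall : ∀ i ∈ Finset.univ, w (Y i ω) = 0 :=
        (Finset.sum_eq_zero_iff_of_nonneg (fun j _ => hw0 _)).mp hs
      have hP0 : P ω = 0 := by
        rw [hPdef ω]
        exact Finset.sum_eq_zero (fun i hi => by rw [hall i hi, mul_zero])
      rw [hP0, hs]
      simp
    · field_simp
      ring
  -- integrability of U^2, (1 - S/N)^2, V^2
  have hPint : Integrable P μ := hPmem.integrable one_le_two
  have hPsq : Integrable (fun ω => P ω ^ 2) μ := hPmem.integrable_sq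
  have hU2int : Integrable (fun ω => (U ω) ^ 2) μ := by
    have h1 := ((hPsq.const_mul (1 / (N:ℝ) ^ 2)).sub (hPint.const_mul (2 * I / N))).add
      (integrable_const (I ^ 2))
    refine h1.congr (Filter.Eventually.of_forall fun ω => ?_)
    rw [hU]; simp only [Pi.add_apply, Pi.sub_apply]; field_simp; ring
  have hSint : Integrable S μ := hSmem.integrable one_le_two
  have hSsq : Integrable (fun ω => S ω ^ 2) μ := hSmem.integrable_sq
  have hB2int : Integrable (fun ω => (1 - S ω / N) ^ 2) μ := by
    have h1 := ((hSsq.const_mul (1 / (N:ℝ) ^ 2)).sub (hSint.const_mul (2 / N))).add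
      (integrable_const 1)
    refine h1.congr (Filter.Eventually.of_forall fun ω => ?_)
    simp only [Pi.add_apply, Pi.sub_apply]; field_simp; ring
  have hV2le : ∀ ω, (V ω) ^ 2 ≤ G ^ 2 * (1 - S ω / N) ^ 2 := by
    intro ω
    have h1 : (T ω) ^ 2 ≤ G ^ 2 :=
      sq_le_sq' (abs_le.mp (hTb ω)).1 (abs_le.mp (hTb ω)).2
    rw [hV]; simp only; rw [mul_pow]
    exact mul_le_mul_of_nonneg_right h1 (sq_nonneg _)
  have hV2int : Integrable (fun ω => (V ω) ^ 2) μ := by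
    refine (hB2int.const_mul (G ^ 2)).mono' ((hVm.pow_const 2).aestronglyMeasurable)
      (Filter.Eventually.of_forall fun ω => ?_)
    rw [Real.norm_eq_abs, abs_of_nonneg (sq_nonneg _)]
    exact hV2le ω
  -- main estimate
  have step1 : ∫ ω, (T ω - I) ^ 2 ∂μ ≤ ∫ ω, (2 * (U ω) ^ 2 + 2 * (V ω) ^ 2) ∂μ := by
    refine integral_mono_of_nonneg (Filter.Eventually.of_forall fun ω => sq_nonneg _)
      ((hU2int.const_mul 2).add (hV2int.const_mul 2))
      (Filter.Eventually.of_forall fun ω => ?_)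
    show (T ω - I) ^ 2 ≤ 2 * U ω ^ 2 + 2 * V ω ^ 2
    rw [hid ω]
    nlinarith [sq_nonneg (U ω - V ω)]
  have step2 : ∫ ω, (2 * (U ω) ^ 2 + 2 * (V ω) ^ 2) ∂μ
      = 2 * ∫ ω, (U ω) ^ 2 ∂μ + 2 * ∫ ω, (V ω) ^ 2 ∂μ := by
    rw [integral_add (hU2int.const_mul 2) (hV2int.const_mul 2), integral_const_mul,
      integral_const_mul]
  have hUval : ∫ ω, (U ω) ^ 2 ∂μ = ((∫ z, (g z * w z) ^ 2 ∂Q) - I ^ 2) / N := hUint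
  have hBval : ∫ ω, (1 - S ω / N) ^ 2 ∂μ = (ρ - 1) / N := by
    rw [← hBint]
    refine integral_congr_ae (Filter.Eventually.of_forall fun ω => ?_)
    show (1 - S ω / (N:ℝ)) ^ 2 = ((∑ i, w (Y i ω)) / (N:ℝ) - 1) ^ 2
    rw [← hSdef ω]
    ring
  have hVval : ∫ ω, (V ω) ^ 2 ∂μ ≤ G ^ 2 * ((ρ - 1) / N) := by
    calc ∫ ω, (V ω) ^ 2 ∂μ ≤ ∫ ω, G ^ 2 * (1 - S ω / N) ^ 2 ∂μ :=
          integral_mono_of_nonneg (Filter.Eventually.of_forall fun ω => sq_nonneg _)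
            (hB2int.const_mul _) (Filter.Eventually.of_forall fun ω => hV2le ω)
      _ = G ^ 2 * ((ρ - 1) / N) := by rw [integral_const_mul, hBval]
  have hfinal : ∫ ω, (T ω - I) ^ 2 ∂μ ≤ (4 * G ^ 2 / N) * ρ - 2 * G ^ 2 / N := by
    have h1 : ∫ ω, (U ω) ^ 2 ∂μ ≤ G ^ 2 * ρ / N := by
      rw [hUval]
      have hI2 : (0:ℝ) ≤ I ^ 2 := sq_nonneg I
      have hle : (∫ z, (g z * w z) ^ 2 ∂Q) - I ^ 2 ≤ G ^ 2 * ρ := by linarith [hκρ]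
      calc ((∫ z, (g z * w z) ^ 2 ∂Q) - I ^ 2) / (N:ℝ) ≤ (G ^ 2 * ρ) / (N:ℝ) := by gcongr
        _ = G ^ 2 * ρ / N := rfl
    calc ∫ ω, (T ω - I) ^ 2 ∂μ ≤ 2 * ∫ ω, (U ω) ^ 2 ∂μ + 2 * ∫ ω, (V ω) ^ 2 ∂μ :=
          step1.trans_eq step2
      _ ≤ 2 * (G ^ 2 * ρ / N) + 2 * (G ^ 2 * ((ρ - 1) / N)) := by
          have h2 := hVval
          linarith
      _ = (4 * G ^ 2 / N) * ρ - 2 * G ^ 2 / N := by field_simp; ring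
  exact hfinal
end

section
/- For the Pólya-Gamma Gibbs sampler for Bayesian logistic regression with prior covariance Σ, the β-marginal chain satisfies the one-step drift E[‖β_1‖₂² + 1 | β_0 = β] ≤ 1 + ‖Σ‖₂² ‖Xᵀ(Y - (1/2)1_n)‖₂² + tr(Σ) for every β ∈ ℝ^d, where conditionally β_1 | ω ~ N(μ(ω), Σ(ω)) with Σ(ω) = (XᵀΩX + Σ⁻¹)⁻¹, μ(ω) = Σ(ω) Xᵀ(Y - (1/2)1_n), Ω = diag(ω), ω having arbitrary distribution supported on (0,∞)^n given β. -/
open MeasureTheory ProbabilityTheory Matrix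
open scoped Matrix.Norms.L2Operator

private lemma herm_dot' {d : ℕ} {M : Matrix (Fin d) (Fin d) ℝ} (hM : M.IsHermitian)
    (u v : Fin d → ℝ) : u ⬝ᵥ M *ᵥ v = (M *ᵥ u) ⬝ᵥ v := by
  rw [Matrix.dotProduct_mulVec, ← Matrix.mulVec_transpose,
    ← Matrix.conjTranspose_eq_transpose_of_trivial, hM]

private lemma psd_trace_nonneg' {d : ℕ} {M : Matrix (Fin d) (Fin d) ℝ}
    (hM : M.PosSemidef) : 0 ≤ M.trace := by
  rw [Matrix.trace]
  refine Finset.sum_nonneg fun i _ => ?_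
  have := hM.dotProduct_mulVec_nonneg (Pi.single i 1)
  simpa [dotProduct, Matrix.mulVec, Pi.single_apply] using this

private lemma inv_sub_inv_psd' {d : ℕ} {P Q : Matrix (Fin d) (Fin d) ℝ}
    (hP : P.PosDef) (hQ : Q.PosDef) (hPQ : (P - Q).PosSemidef) :
    (Q⁻¹ - P⁻¹).PosSemidef := by
  refine .of_dotProduct_mulVec_nonneg ((hQ.inv.isHermitian).sub (hP.inv.isHermitian)) fun x => ?_
  have hPdet : IsUnit P.det := isUnit_iff_ne_zero.mpr hP.det_pos.ne'
  have hQdet : IsUnit Q.det := isUnit_iff_ne_zero.mpr hQ.det_pos.ne'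
  set y := P⁻¹ *ᵥ x with hy
  have hPy : P *ᵥ y = x := by
    rw [hy, Matrix.mulVec_mulVec, Matrix.mul_nonsing_inv _ hPdet, Matrix.one_mulVec]
  have hQx : Q *ᵥ (Q⁻¹ *ᵥ x) = x := by
    rw [Matrix.mulVec_mulVec, Matrix.mul_nonsing_inv _ hQdet, Matrix.one_mulVec]
  have hz := hQ.posSemidef.dotProduct_mulVec_nonneg (y - Q⁻¹ *ᵥ x)
  rw [star_trivial, Matrix.mulVec_sub, dotProduct_sub, sub_dotProduct,
    sub_dotProduct, hQx] at hz
  have hsym : (Q⁻¹ *ᵥ x) ⬝ᵥ (Q *ᵥ y) = x ⬝ᵥ y := by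
    rw [herm_dot' hQ.isHermitian, hQx]
  have hyx : y ⬝ᵥ x = x ⬝ᵥ y := dotProduct_comm _ _
  have hQinvx : (Q⁻¹ *ᵥ x) ⬝ᵥ x = x ⬝ᵥ (Q⁻¹ *ᵥ x) := dotProduct_comm _ _
  have hpq := hPQ.dotProduct_mulVec_nonneg y
  rw [star_trivial, Matrix.sub_mulVec, dotProduct_sub, hPy] at hpq
  have hgoal : x ⬝ᵥ ((Q⁻¹ - P⁻¹) *ᵥ x) = x ⬝ᵥ (Q⁻¹ *ᵥ x) - x ⬝ᵥ y := by
    rw [Matrix.sub_mulVec, dotProduct_sub, hy]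
  rw [star_trivial, hgoal]
  linarith

private lemma quad_le_norm' {d : ℕ} (S : Matrix (Fin d) (Fin d) ℝ) (x : Fin d → ℝ) :
    x ⬝ᵥ (S *ᵥ x) ≤ ‖S‖ * ∑ j, x j ^ 2 := by
  set x' : EuclideanSpace ℝ (Fin d) := WithLp.toLp 2 x
  have hx2 : ‖x'‖ ^ 2 = ∑ j, x j ^ 2 := by
    rw [EuclideanSpace.norm_eq, Real.sq_sqrt (by positivity)]
    simp [x', sq_abs]
  have hinner : x ⬝ᵥ (S *ᵥ x)
      = @inner ℝ _ _ x' ((EuclideanSpace.equiv (Fin d) ℝ).symm (S *ᵥ x)) := by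
    simp [x', PiLp.inner_apply, dotProduct, RCLike.inner_apply, mul_comm]
  have hcs := real_inner_le_norm x' ((EuclideanSpace.equiv (Fin d) ℝ).symm (S *ᵥ x))
  have hop := S.l2_opNorm_mulVec x'
  have hxnn : (0:ℝ) ≤ ‖x'‖ := norm_nonneg _
  calc x ⬝ᵥ (S *ᵥ x) ≤ ‖x'‖ * ‖(EuclideanSpace.equiv (Fin d) ℝ).symm (S *ᵥ x)‖ := by
        rw [hinner]; exact hcs
    _ ≤ ‖x'‖ * (‖S‖ * ‖x'‖) := mul_le_mul_of_nonneg_left hop hxnn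
    _ = ‖S‖ * ∑ j, x j ^ 2 := by rw [← hx2]; ring

private lemma cs_bound' {d : ℕ} {M : Matrix (Fin d) (Fin d) ℝ} (hM : M.PosDef) (c : ℝ)
    (hc : 0 ≤ c) (hq : ∀ x : Fin d → ℝ, x ⬝ᵥ (M *ᵥ x) ≤ c * ∑ j, x j ^ 2) (v : Fin d → ℝ) :
    ∑ j, (M *ᵥ v) j ^ 2 ≤ c ^ 2 * ∑ j, v j ^ 2 := by
  have hb0 : (0:ℝ) ≤ ∑ j, v j ^ 2 := Finset.sum_nonneg fun j _ => sq_nonneg _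
  by_cases hv : v = 0
  · simp [hv, Matrix.mulVec_zero]
  · have hqpos : 0 < v ⬝ᵥ (M *ᵥ v) := by
      have := hM.dotProduct_mulVec_pos hv; rwa [star_trivial] at this
    have ha : ∑ j, (M *ᵥ v) j ^ 2 = (M *ᵥ v) ⬝ᵥ (M *ᵥ v) := by
      simp [dotProduct, sq]
    have hvMu : v ⬝ᵥ (M *ᵥ (M *ᵥ v)) = (M *ᵥ v) ⬝ᵥ (M *ᵥ v) := by
      rw [herm_dot' hM.isHermitian, dotProduct_comm]
    have hz := hM.posSemidef.dotProduct_mulVec_nonneg ((v ⬝ᵥ (M *ᵥ v)) • (M *ᵥ v) - ((M *ᵥ v) ⬝ᵥ (M *ᵥ v)) • v)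
    simp only [star_trivial, Matrix.mulVec_sub, Matrix.mulVec_smul,
      dotProduct_sub, sub_dotProduct, dotProduct_smul,
      smul_dotProduct, smul_eq_mul, hvMu] at hz
    have hp0 := hq (M *ᵥ v)
    have hqb := hq v
    have hann : 0 ≤ (M *ᵥ v) ⬝ᵥ (M *ᵥ v) := by
      rw [← ha]; exact Finset.sum_nonneg fun j _ => sq_nonneg _
    rw [ha] at hp0 ⊢
    generalize (M *ᵥ v) ⬝ᵥ (M *ᵥ (M *ᵥ v)) = p at hz hp0
    generalize (M *ᵥ v) ⬝ᵥ (M *ᵥ v) = a at hz hp0 hann ⊢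
    generalize v ⬝ᵥ (M *ᵥ v) = q at hz hqb hqpos
    have hcs : a * a ≤ p * q := by nlinarith [hz, hqpos]
    have hpq' : p * q ≤ (c * a) * (c * ∑ j, v j ^ 2) :=
      mul_le_mul hp0 hqb hqpos.le (by positivity)
    have haa : a * a ≤ (c ^ 2 * ∑ j, v j ^ 2) * a := by nlinarith [hcs, hpq']
    rcases eq_or_lt_of_le hann with h0 | hapos
    · rw [← h0]; positivity
    · exact le_of_mul_le_mul_right haa hapos

private lemma key_bound' {d : ℕ} (S : Matrix (Fin d) (Fin d) ℝ) (hS : S.PosDef)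
    (A : Matrix (Fin d) (Fin d) ℝ) (hA : A.PosSemidef) (v : Fin d → ℝ) :
    (∑ j, ((A + S⁻¹)⁻¹ *ᵥ v) j ^ 2) + (A + S⁻¹)⁻¹.trace
      ≤ ‖S‖ ^ 2 * (∑ j, v j ^ 2) + S.trace := by
  have hSdet : IsUnit S.det := isUnit_iff_ne_zero.mpr hS.det_pos.ne'
  have hB : (A + S⁻¹).PosDef := Matrix.PosDef.posSemidef_add hA hS.inv
  have hM : (A + S⁻¹)⁻¹.PosDef := hB.inv
  have hdiff : (S - (A + S⁻¹)⁻¹).PosSemidef := by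
    have h1 : ((A + S⁻¹) - S⁻¹).PosSemidef := by simpa using hA
    have := inv_sub_inv_psd' hB hS.inv h1
    rwa [Matrix.nonsing_inv_nonsing_inv _ hSdet] at this
  have hq : ∀ x : Fin d → ℝ, x ⬝ᵥ ((A + S⁻¹)⁻¹ *ᵥ x) ≤ ‖S‖ * ∑ j, x j ^ 2 := by
    intro x
    have h2 := hdiff.dotProduct_mulVec_nonneg x
    rw [star_trivial, Matrix.sub_mulVec, dotProduct_sub] at h2
    linarith [quad_le_norm' S x]
  have htr : (A + S⁻¹)⁻¹.trace ≤ S.trace := by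
    have := psd_trace_nonneg' hdiff
    rw [Matrix.trace_sub] at this
    linarith
  have := cs_bound' hM ‖S‖ (norm_nonneg _) hq v
  linarith

/-- One-step drift for the β-marginal of the Pólya-Gamma Gibbs sampler: if, given the
auxiliary variables `w` (positive coordinates), `β₁` has conditional second moment
`E[‖β₁‖² | w] = ‖μ(w)‖² + tr(Σ(w))` with `Σ(w) = (Xᵀ diag(w) X + Σ⁻¹)⁻¹` and
`μ(w) = Σ(w) Xᵀ(Y - ½1)`, then
`E[‖β₁‖² + 1] ≤ 1 + ‖Σ‖₂² ‖Xᵀ(Y - ½1)‖₂² + tr(Σ)`. -/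
theorem polya_gamma_one_step_drift
    (n d : ℕ) {Ω : Type*} [MeasurableSpace Ω] (μ : Measure Ω) [IsProbabilityMeasure μ]
    (S : Matrix (Fin d) (Fin d) ℝ) (hS : S.PosDef)
    (X : Matrix (Fin n) (Fin d) ℝ) (Y : Fin n → ℝ) (hY : ∀ i, Y i = 0 ∨ Y i = 1)
    (w : Ω → Fin n → ℝ) (hwm : Measurable w) (hw : ∀ᵐ ω' ∂μ, ∀ i, 0 < w ω' i)
    (β1 : Ω → Fin d → ℝ) (hβ1m : Measurable β1)
    (hβ1int : Integrable (fun ω' => ∑ j, (β1 ω' j) ^ 2) μ)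
    (hcondmoment :
      μ[fun ω' => ∑ j, (β1 ω' j) ^ 2 | MeasurableSpace.comap w inferInstance]
        =ᵐ[μ] fun ω' =>
          (∑ j, (((Xᵀ * Matrix.diagonal (w ω') * X + S⁻¹)⁻¹).mulVec
              (Xᵀ.mulVec (fun i => Y i - 1/2)) j) ^ 2)
            + ((Xᵀ * Matrix.diagonal (w ω') * X + S⁻¹)⁻¹).trace) :
    ∫ ω', ((∑ j, (β1 ω' j) ^ 2) + 1) ∂μ
      ≤ 1 + ‖S‖ ^ 2 * (∑ j, (Xᵀ.mulVec (fun i => Y i - 1/2) j) ^ 2) + S.trace := by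
  set v : Fin d → ℝ := Xᵀ.mulVec (fun i => Y i - 1/2) with hv
  set g : Ω → ℝ := fun ω' =>
      (∑ j, (((Xᵀ * Matrix.diagonal (w ω') * X + S⁻¹)⁻¹).mulVec v j) ^ 2)
        + ((Xᵀ * Matrix.diagonal (w ω') * X + S⁻¹)⁻¹).trace with hg
  have hm : MeasurableSpace.comap w inferInstance ≤ ‹MeasurableSpace Ω› := hwm.comap_le
  -- the a.e. pointwise bound
  have hbound : ∀ᵐ ω' ∂μ, g ω' ≤ ‖S‖ ^ 2 * (∑ j, v j ^ 2) + S.trace := by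
    filter_upwards [hw] with ω' hω'
    have hA : (Xᵀ * Matrix.diagonal (w ω') * X).PosSemidef := by
      have hD : (Matrix.diagonal (w ω')).PosSemidef :=
        Matrix.PosSemidef.diagonal fun i => (hω' i).le
      have := hD.conjTranspose_mul_mul_same X
      rwa [Matrix.conjTranspose_eq_transpose_of_trivial] at this
    exact key_bound' S hS _ hA v
  -- integrability of g
  have hgint : Integrable g μ :=
    (integrable_condExp (m := MeasurableSpace.comap w inferInstance)).congr hcondmoment
  -- ∫ f = ∫ g
  have hfg : ∫ ω', (∑ j, (β1 ω' j) ^ 2) ∂μ = ∫ ω', g ω' ∂μ := by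
    rw [← integral_condExp hm]
    exact integral_congr_ae hcondmoment
  have hgle : ∫ ω', g ω' ∂μ ≤ ‖S‖ ^ 2 * (∑ j, v j ^ 2) + S.trace := by
    calc ∫ ω', g ω' ∂μ
        ≤ ∫ _ω', (‖S‖ ^ 2 * (∑ j, v j ^ 2) + S.trace) ∂μ :=
          integral_mono_ae hgint (integrable_const _) hbound
      _ = ‖S‖ ^ 2 * (∑ j, v j ^ 2) + S.trace := by
          simp [integral_const]
  have hsplit : ∫ ω', ((∑ j, (β1 ω' j) ^ 2) + 1) ∂μ
      = (∫ ω', (∑ j, (β1 ω' j) ^ 2) ∂μ) + 1 := by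
    rw [integral_add hβ1int (integrable_const 1)]
    simp [integral_const]
  rw [hsplit, hfg]
  linarith
end
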